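/- arXiv:funct-an/9607003 — 3 statements merged into one kernel-verified Lean document; each statement's English description precedes it below -/
import Mathlib

section
/- Let θ ∈ [0,1] be irrational, 𝔄_θ the universal C*-algebra generated by two unitaries U, V with VU = e^{2πiθ}UV (the irrational rotation algebra, which is simple), and β the action of the two-torus 𝕋² on 𝔄_θ determined by β_{(z₁,z₂)}(U) = z₁U and β_{(z₁,z₂)}(V) = z₂V. Then β_{(z₁,z₂)} is an inner automorphism of 𝔄_θ if and only if z₁ and z₂ both lie in the subgroup {e^{2πi(nθ+m)} : n,m ∈ ℤ} of 𝕋; moreover, any unitary W ∈ 𝔄_θ implementing β_{(z₁,z₂)} is of the form λU^nV^m with λ ∈ 𝕋 and n,m ∈ ℤ. -/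
/-- A simple C*-algebra: the only closed two-sided ideals are `⊥` and `⊤`. -/
def IsSimpleCStar (A : Type*) [CStarAlgebra A] : Prop :=
  ∀ I : TwoSidedIdeal A, IsClosed (I : Set A) → I = ⊥ ∨ I = ⊤

/-- A model of the irrational rotation algebra `𝔄_θ`: a C*-algebra generated by two unitaries
`U`, `V` with `VU = e^{2πiθ}UV`, universal for this relation (and simple, as is automatic for
irrational `θ`). -/
structure RotationAlgebraModel (θ : ℝ) (A : Type*) [CStarAlgebra A] where
  U : unitary A
  V : unitary A
  rel : (V : A) * (U : A) = Complex.exp (2 * Real.pi * Complex.I * θ) • ((U : A) * (V : A))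
  generated : (StarAlgebra.adjoin ℂ {(U : A), (V : A)}).topologicalClosure = ⊤
  universal : ∀ (B : Type) (_ : CStarAlgebra B) (u v : unitary B),
    (v : B) * (u : B) = Complex.exp (2 * Real.pi * Complex.I * θ) • ((u : B) * (v : B)) →
    ∃ Φ : A →⋆ₐ[ℂ] B, Φ U = u ∧ Φ V = v
  simple : IsSimpleCStar A



noncomputable section
namespace RotAux

open Complex
open scoped ENNReal

abbrev Hs : Type := lp (fun _ : ℤ => ℂ) 2

lemma wtMem (c : ℤ → ℂ) (hc : ∀ j, ‖c j‖ = 1) (k : ℤ) (ξ : Hs) :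
    Memℓp (fun j => c j * ξ (j + k)) 2 := by
  apply memℓp_gen
  have h := lp.memℓp ξ
  rw [memℓp_gen_iff (by norm_num)] at h
  have he : (fun j : ℤ => ‖c j * ξ (j + k)‖ ^ (2 : ℝ≥0∞).toReal)
      = (fun j : ℤ => ‖ξ j‖ ^ (2 : ℝ≥0∞).toReal) ∘ (Equiv.addRight k) := by
    funext j
    simp [norm_mul, hc j]
  rw [he]
  exact ((Equiv.addRight k).summable_iff).2 h

/-- weighted translation `ξ ↦ (j ↦ c j * ξ (j + k))` as a linear isometry equiv. -/
def wt (c : ℤ → ℂ) (hc : ∀ j, ‖c j‖ = 1) (k : ℤ) : Hs ≃ₗᵢ[ℂ] Hs where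
  toFun ξ := ⟨fun j => c j * ξ (j + k), wtMem c hc k ξ⟩
  invFun ξ := ⟨fun j => (starRingEnd ℂ) (c (j + -k)) * ξ (j + -k),
    wtMem _ (fun j => by simp [hc]) (-k) ξ⟩
  map_add' ξ η := by ext j; simp [mul_add]; rfl
  map_smul' r ξ := by ext j; simp [mul_comm r, mul_assoc]
  left_inv ξ := by
    ext j
    show (starRingEnd ℂ) (c (j + -k)) * (c (j + -k) * ξ (j + -k + k)) = ξ j
    have h1 : (starRingEnd ℂ) (c (j + -k)) * c (j + -k) = 1 := by
      rw [Complex.conj_mul']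
      simp [hc]
    rw [← mul_assoc, h1, one_mul, neg_add_cancel_right]
  right_inv ξ := by
    ext j
    show c j * ((starRingEnd ℂ) (c (j + k + -k)) * ξ (j + k + -k)) = ξ j
    rw [add_neg_cancel_right]
    have h1 : c j * (starRingEnd ℂ) (c j) = 1 := by
      rw [Complex.mul_conj']
      simp [hc]
    rw [← mul_assoc, h1, one_mul]
  norm_map' ξ := by
    rw [lp.norm_eq_tsum_rpow (by norm_num) _, lp.norm_eq_tsum_rpow (by norm_num) ξ]
    congr 1
    have he : (fun j : ℤ => ‖c j * ξ (j + k)‖ ^ (2 : ℝ≥0∞).toReal)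
        = (fun j : ℤ => ‖ξ j‖ ^ (2 : ℝ≥0∞).toReal) ∘ (Equiv.addRight k) := by
      funext j
      simp [norm_mul, hc j]
    calc ∑' (j : ℤ), ‖(⟨fun j => c j * ξ (j + k), wtMem c hc k ξ⟩ : Hs) j‖ ^ (2 : ℝ≥0∞).toReal
        = ∑' (j : ℤ), ((fun j : ℤ => ‖ξ j‖ ^ (2 : ℝ≥0∞).toReal) ∘ (Equiv.addRight k)) j := by
          apply tsum_congr; intro j
          have := congrFun he j
          exact this
      _ = _ := by
          exact Equiv.tsum_eq (Equiv.addRight k) (fun j : ℤ => ‖ξ j‖ ^ (2 : ℝ≥0∞).toReal)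

@[simp] lemma wt_apply (c : ℤ → ℂ) (hc : ∀ j, ‖c j‖ = 1) (k : ℤ) (ξ : Hs) (j : ℤ) :
    (wt c hc k ξ) j = c j * ξ (j + k) := rfl

/-- as a unitary element of `Hs →L[ℂ] Hs`. -/
def wtU (c : ℤ → ℂ) (hc : ∀ j, ‖c j‖ = 1) (k : ℤ) : unitary (Hs →L[ℂ] Hs) :=
  Unitary.linearIsometryEquiv.symm (wt c hc k)

@[simp] lemma wtU_apply (c : ℤ → ℂ) (hc : ∀ j, ‖c j‖ = 1) (k : ℤ) (ξ : Hs) (j : ℤ) :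
    ((wtU c hc k : Hs →L[ℂ] Hs) ξ) j = c j * ξ (j + k) := rfl


lemma clm_eq_zero_of_single (w : Hs →L[ℂ] Hs) (h : ∀ k : ℤ, w (lp.single 2 k 1) = 0) :
    w = 0 := by
  ext ξ
  have hs : HasSum (fun i : ℤ => lp.single 2 i (ξ i)) ξ :=
    lp.hasSum_single (by norm_num) ξ
  have hs2 : HasSum (fun i : ℤ => w (lp.single 2 i (ξ i))) (w ξ) := hs.mapL w
  have he : (fun i : ℤ => w (lp.single 2 i (ξ i))) = fun _ => 0 := by
    funext i
    have : (lp.single 2 i (ξ i) : Hs) = (ξ i) • (lp.single 2 i 1 : Hs) := by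
      ext j
      rw [lp.coeFn_smul, Pi.smul_apply, smul_eq_mul]
      rcases eq_or_ne j i with rfl | hji
      · rw [lp.single_apply_self, lp.single_apply_self, mul_one]
      · rw [lp.single_apply_ne 2 i _ hji, lp.single_apply_ne 2 i _ hji, mul_zero]
    rw [this, map_smul, h i, smul_zero]
  rw [he] at hs2
  have := hs2.unique hasSum_zero
  simp [this]

lemma single_ne_zero' : (lp.single 2 (0 : ℤ) (1 : ℂ) : Hs) ≠ 0 := by
  intro h
  have h0 : (lp.single 2 (0 : ℤ) (1 : ℂ) : Hs) 0 = 1 := lp.single_apply_self 2 0 1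
  rw [h] at h0
  exact one_ne_zero h0.symm

variable {θ : ℝ}

lemma norm_gamma_zpow (j : ℤ) : ‖Complex.exp (2 * Real.pi * Complex.I * θ) ^ j‖ = 1 := by
  rw [norm_zpow]
  have : (2 * Real.pi * Complex.I * θ : ℂ) = ((2 * Real.pi * θ : ℝ) : ℂ) * Complex.I := by
    push_cast; ring
  rw [this, Complex.norm_exp_ofReal_mul_I, one_zpow]

lemma gamma_zpow_inj (hθ : Irrational θ) {a b : ℤ}
    (h : Complex.exp (2 * Real.pi * Complex.I * θ) ^ a
       = Complex.exp (2 * Real.pi * Complex.I * θ) ^ b) : a = b := by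
  by_contra hne
  have hγ : (Complex.exp (2 * Real.pi * Complex.I * θ)) ≠ 0 := Complex.exp_ne_zero _
  have hd : Complex.exp (2 * Real.pi * Complex.I * θ) ^ (a - b) = 1 := by
    rw [zpow_sub₀ hγ, h, div_self (zpow_ne_zero _ hγ)]
  rw [← Complex.exp_int_mul] at hd
  rcases Complex.exp_eq_one_iff.mp hd with ⟨n, hn⟩
  have h0 : (2 * (Real.pi : ℂ) * Complex.I) * (((a - b : ℤ) : ℂ) * θ - n) = 0 := by
    linear_combination hn
  have hπ : (2 * (Real.pi : ℂ) * Complex.I) ≠ 0 := by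
    simp [Real.pi_ne_zero, Complex.I_ne_zero]
  have h1 : ((a - b : ℤ) : ℂ) * θ - n = 0 := by
    rcases mul_eq_zero.mp h0 with h' | h'
    · exact absurd h' hπ
    · exact h'
  have h2 : ((a - b : ℤ) : ℝ) * θ = (n : ℝ) := by
    have := sub_eq_zero.mp h1
    exact_mod_cast this
  have hab : ((a - b : ℤ) : ℝ) ≠ 0 := by
    exact_mod_cast sub_ne_zero.mpr hne
  have hab' : (a : ℝ) - b ≠ 0 := by push_cast at hab; exact hab
  have : θ = (((n : ℚ) / ((a - b : ℤ) : ℚ) : ℚ) : ℝ) := by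
    push_cast
    rw [eq_div_iff hab']
    push_cast at h2
    linear_combination h2
  exact hθ ⟨_, this.symm⟩

/-- The diagonal unitary `diag (γ^j)`. -/
def diagU (θ : ℝ) : unitary (Hs →L[ℂ] Hs) :=
  wtU (fun j => Complex.exp (2 * Real.pi * Complex.I * θ) ^ j)
    (fun j => norm_gamma_zpow j) 0

lemma diagU_single (k : ℤ) :
    (diagU θ : Hs →L[ℂ] Hs) (lp.single 2 k 1)
      = Complex.exp (2 * Real.pi * Complex.I * θ) ^ k • lp.single 2 k 1 := by
  ext j
  rw [lp.coeFn_smul, Pi.smul_apply]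
  have hL : ((diagU θ : Hs →L[ℂ] Hs) (lp.single 2 k 1) : ℤ → ℂ) j
      = Complex.exp (2 * Real.pi * Complex.I * θ) ^ j * ((lp.single 2 k 1 : Hs) : ℤ → ℂ) (j + 0) := rfl
  rw [hL, add_zero, smul_eq_mul]
  rcases eq_or_ne j k with rfl | hjk
  · simp [lp.single_apply_self]
  · simp [lp.single_apply_ne 2 k _ hjk, Pi.single_eq_of_ne hjk]

lemma diag_extract (hθ : Irrational θ) (w : Hs →L[ℂ] Hs) (hw : w * star w = 1) (z : ℂ)
    (hrel : w * (diagU θ : Hs →L[ℂ] Hs) = z • ((diagU θ : Hs →L[ℂ] Hs) * w)) :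
    ∃ n : ℤ, z = Complex.exp (2 * Real.pi * Complex.I * θ) ^ n := by
  by_contra hz
  push_neg at hz
  set γ := Complex.exp (2 * Real.pi * Complex.I * θ) with hγdef
  have hγ : γ ≠ 0 := Complex.exp_ne_zero _
  have hzero : ∀ k : ℤ, w (lp.single 2 k 1) = 0 := by
    intro k
    have h1 := congrArg (fun T : Hs →L[ℂ] Hs => T (lp.single 2 k 1)) hrel
    simp only [ContinuousLinearMap.mul_apply, ContinuousLinearMap.smul_apply] at h1
    rw [diagU_single k, map_smul] at h1
    -- h1 : γ ^ k • w (single k 1) = z • (diagU θ) (w (single k 1))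
    ext j
    have h2 := congrFun (congrArg (Subtype.val) h1) j
    have h3 : γ ^ k * (w (lp.single 2 k 1)) j
        = z * (γ ^ j * (w (lp.single 2 k 1)) (j + 0)) := h2
    rw [add_zero] at h3
    have hne : γ ^ k - z * γ ^ j ≠ 0 := by
      intro h
      apply hz (k - j)
      rw [zpow_sub₀ hγ, eq_div_iff (zpow_ne_zero _ hγ)]
      linear_combination -h
    have : (γ ^ k - z * γ ^ j) * (w (lp.single 2 k 1)) j = 0 := by linear_combination h3
    have h4 := (mul_eq_zero.mp this).resolve_left hne
    simpa using h4
  have hw0 : w = 0 := clm_eq_zero_of_single w hzero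
  rw [hw0, zero_mul] at hw
  have := congrArg (fun T : Hs →L[ℂ] Hs => T (lp.single 2 0 1)) hw
  simp only [ContinuousLinearMap.zero_apply, ContinuousLinearMap.one_apply] at this
  exact single_ne_zero' this.symm


/-- The (weighted) shift unitary. -/
def shiftU (k : ℤ) : unitary (Hs →L[ℂ] Hs) :=
  wtU (fun _ => 1) (fun _ => norm_one) k

lemma rep1_rel :
    (shiftU 1 : Hs →L[ℂ] Hs) * (diagU θ : Hs →L[ℂ] Hs)
      = Complex.exp (2 * Real.pi * Complex.I * θ) •
          ((diagU θ : Hs →L[ℂ] Hs) * (shiftU 1 : Hs →L[ℂ] Hs)) := by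
  ext ξ j
  show (1 : ℂ) * (Complex.exp (2 * Real.pi * Complex.I * θ) ^ (j+1) * ξ (j + 1 + 0))
      = Complex.exp (2 * Real.pi * Complex.I * θ) *
          (Complex.exp (2 * Real.pi * Complex.I * θ) ^ j * ((1:ℂ) * ξ (j + 0 + 1)))
  rw [zpow_add_one₀ (Complex.exp_ne_zero _)]
  rw [show j + 1 + 0 = j + 0 + 1 by ring]
  ring

lemma rep2_rel :
    (diagU θ : Hs →L[ℂ] Hs) * (shiftU (-1) : Hs →L[ℂ] Hs)
      = Complex.exp (2 * Real.pi * Complex.I * θ) •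
          ((shiftU (-1) : Hs →L[ℂ] Hs) * (diagU θ : Hs →L[ℂ] Hs)) := by
  ext ξ j
  show Complex.exp (2 * Real.pi * Complex.I * θ) ^ j * ((1:ℂ) * ξ (j + 0 + -1))
      = Complex.exp (2 * Real.pi * Complex.I * θ) *
          ((1:ℂ) * (Complex.exp (2 * Real.pi * Complex.I * θ) ^ (j + -1) * ξ (j + -1 + 0)))
  rw [zpow_add₀ (Complex.exp_ne_zero _) j (-1), zpow_neg_one]
  rw [show j + 0 + -1 = j + -1 + 0 by ring]
  field_simp

lemma one_ne_zero_clm : (1 : Hs →L[ℂ] Hs) ≠ 0 := by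
  intro h
  apply single_ne_zero'
  have := congrArg (fun T : Hs →L[ℂ] Hs => T (lp.single 2 0 1)) h
  simpa using this

end RotAux

open scoped CStarAlgebra

section ASide

variable {A : Type*} [CStarAlgebra A]

lemma RotAux.conj_left (γ : ℂ) (hγ : γ ≠ 0) (u v : unitary A)
    (h : (v : A) * (u : A) = γ • ((u : A) * (v : A))) :
    ∀ b : ℤ, ((v ^ b : unitary A) : A) * (u : A)
      = γ ^ b • ((u : A) * ((v ^ b : unitary A) : A)) := by
  have hsv : star (v : A) * (v : A) = 1 := Unitary.coe_star_mul_self v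
  have hvs : (v : A) * star (v : A) = 1 := Unitary.coe_mul_star_self v
  have h1 : (u : A) * star (v : A) = γ • (star (v : A) * (u : A)) := by
    calc (u : A) * star (v : A)
        = star (v : A) * ((v : A) * (u : A)) * star (v : A) := by
          rw [← mul_assoc, hsv, one_mul]
      _ = star (v : A) * (γ • ((u : A) * (v : A))) * star (v : A) := by rw [h]
      _ = γ • (star (v : A) * (u : A) * ((v : A) * star (v : A))) := by
          rw [mul_smul_comm, smul_mul_assoc]
          congr 1
          rw [mul_assoc, mul_assoc, mul_assoc]
      _ = γ • (star (v : A) * (u : A)) := by rw [hvs, mul_one]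
  have h2 : star (v : A) * (u : A) = γ⁻¹ • ((u : A) * star (v : A)) := by
    rw [h1, smul_smul, inv_mul_cancel₀ hγ, one_smul]
  intro b
  induction b using Int.induction_on with
  | zero => simp
  | succ n ih =>
      have hco : ((v ^ ((n : ℤ) + 1) : unitary A) : A)
          = ((v ^ (n : ℤ) : unitary A) : A) * (v : A) := by
        rw [zpow_add_one]
        rfl
      rw [hco]
      calc ((v ^ (n : ℤ) : unitary A) : A) * (v : A) * (u : A)
          = ((v ^ (n : ℤ) : unitary A) : A) * ((v : A) * (u : A)) := by rw [mul_assoc]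
        _ = ((v ^ (n : ℤ) : unitary A) : A) * (γ • ((u : A) * (v : A))) := by rw [h]
        _ = γ • (((v ^ (n : ℤ) : unitary A) : A) * (u : A) * (v : A)) := by
            rw [mul_smul_comm, mul_assoc]
        _ = γ • ((γ ^ (n : ℤ) • ((u : A) * ((v ^ (n : ℤ) : unitary A) : A))) * (v : A)) := by
            rw [ih]
        _ = (γ * γ ^ (n : ℤ)) • ((u : A) * (((v ^ (n : ℤ) : unitary A) : A) * (v : A))) := by
            rw [smul_mul_assoc, smul_smul, mul_assoc]
        _ = γ ^ ((n : ℤ) + 1) • ((u : A) * (((v ^ (n : ℤ) : unitary A) : A) * (v : A))) := by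
            rw [zpow_add_one₀ hγ, mul_comm γ]
  | pred n ih =>
      have hco : ((v ^ (-(n : ℤ) - 1) : unitary A) : A)
          = ((v ^ (-(n : ℤ)) : unitary A) : A) * star (v : A) := by
        rw [zpow_sub_one]
        rfl
      rw [hco]
      calc ((v ^ (-(n : ℤ)) : unitary A) : A) * star (v : A) * (u : A)
          = ((v ^ (-(n : ℤ)) : unitary A) : A) * (star (v : A) * (u : A)) := by rw [mul_assoc]
        _ = ((v ^ (-(n : ℤ)) : unitary A) : A) * (γ⁻¹ • ((u : A) * star (v : A))) := by rw [h2]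
        _ = γ⁻¹ • (((v ^ (-(n : ℤ)) : unitary A) : A) * (u : A) * star (v : A)) := by
            rw [mul_smul_comm, mul_assoc]
        _ = γ⁻¹ • ((γ ^ (-(n : ℤ)) • ((u : A) * ((v ^ (-(n : ℤ)) : unitary A) : A))) * star (v : A)) := by
            rw [ih]
        _ = (γ⁻¹ * γ ^ (-(n : ℤ))) • ((u : A) * (((v ^ (-(n : ℤ)) : unitary A) : A) * star (v : A))) := by
            rw [smul_mul_assoc, smul_smul, mul_assoc]
        _ = γ ^ (-(n : ℤ) - 1) • ((u : A) * (((v ^ (-(n : ℤ)) : unitary A) : A) * star (v : A))) := by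
            rw [zpow_sub_one₀ hγ, mul_comm γ⁻¹]

lemma RotAux.central_scalar (hs : ∀ I : TwoSidedIdeal A, IsClosed (I : Set A) → I = ⊥ ∨ I = ⊤)
    [Nontrivial A] (C : A) (hC : ∀ x : A, C * x = x * C) :
    ∃ μ : ℂ, C = μ • (1 : A) := by
  obtain ⟨μ, hμ⟩ := spectrum.nonempty C
  refine ⟨μ, ?_⟩
  set c : A := C - algebraMap ℂ A μ with hcdef
  have hccomm : ∀ x : A, c * x = x * c := by
    intro x
    simp only [hcdef, sub_mul, mul_sub, hC x]
    rw [Algebra.commutes]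
  have hnotunit : ¬ IsUnit c := by
    intro h
    rw [spectrum.mem_iff] at hμ
    apply hμ
    have : algebraMap ℂ A μ - C = -c := by rw [hcdef, neg_sub]
    rw [this]
    exact h.neg
  set J : Submodule ℂ A := LinearMap.range (LinearMap.mulLeft ℂ c) with hJdef
  set Jc : Submodule ℂ A := J.topologicalClosure with hJcdef
  have hJmem : ∀ a : A, c * a ∈ Jc := fun a => J.le_topologicalClosure ⟨a, rfl⟩
  have hcoe : (Jc : Set A) = closure (J : Set A) := rfl
  have hmull : ∀ {x y : A}, y ∈ (Jc : Set A) → x * y ∈ (Jc : Set A) := by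
    intro x y hy
    have hcont : Continuous fun y : A => x * y := continuous_const.mul continuous_id
    have hmt : Set.MapsTo (fun y : A => x * y) (J : Set A) (J : Set A) := by
      rintro z ⟨a, rfl⟩
      refine ⟨x * a, ?_⟩
      simp only [LinearMap.mulLeft_apply]
      rw [← mul_assoc, hccomm x, mul_assoc]
    rw [hcoe] at hy ⊢
    exact hmt.closure hcont hy
  have hmulr : ∀ {x y : A}, y ∈ (Jc : Set A) → y * x ∈ (Jc : Set A) := by
    intro x y hy
    have hcont : Continuous fun y : A => y * x := continuous_id.mul continuous_const
    have hmt : Set.MapsTo (fun y : A => y * x) (J : Set A) (J : Set A) := by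
      rintro z ⟨a, rfl⟩
      refine ⟨a * x, ?_⟩
      simp only [LinearMap.mulLeft_apply]
      rw [← mul_assoc]
    rw [hcoe] at hy ⊢
    exact hmt.closure hcont hy
  set I : TwoSidedIdeal A := TwoSidedIdeal.mk' (Jc : Set A)
    (Jc.zero_mem) (fun ha hb => Jc.add_mem ha hb) (fun ha => Jc.neg_mem ha)
    (fun hb => hmull hb) (fun ha => hmulr ha) with hIdef
  have hIcoe : (I : Set A) = (Jc : Set A) := TwoSidedIdeal.coe_mk' _ _ _ _ _ _
  have hIclosed : IsClosed (I : Set A) := by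
    rw [hIcoe]
    exact J.isClosed_topologicalClosure
  rcases hs I hIclosed with hbot | htop
  · have hcI : c ∈ I := by
      rw [TwoSidedIdeal.mem_mk']
      simpa using hJmem 1
    rw [hbot, TwoSidedIdeal.mem_bot] at hcI
    rw [← sub_eq_zero, ← Algebra.algebraMap_eq_smul_one]
    exact hcI
  · exfalso
    have h1I : (1 : A) ∈ I := by rw [htop]; exact TwoSidedIdeal.mem_top (R := A)
    rw [TwoSidedIdeal.mem_mk'] at h1I
    have h1c : (1 : A) ∈ closure (J : Set A) := h1I
    rw [Metric.mem_closure_iff] at h1c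
    obtain ⟨y, hyJ, hy⟩ := h1c 1 one_pos
    obtain ⟨a, rfl⟩ := hyJ
    simp only [LinearMap.mulLeft_apply] at hy
    have hnorm : ‖(1 : A) - c * a‖ < 1 := by
      rw [← dist_eq_norm]
      exact hy
    have hunit : IsUnit (c * a) := by
      have := (Units.oneSub ((1 : A) - c * a) hnorm).isUnit
      simpa using this
    obtain ⟨Uc, hUc⟩ := hunit
    have hinv1 : c * (a * ((Uc⁻¹ : Aˣ) : A)) = 1 := by
      rw [← mul_assoc, ← hUc, Units.mul_inv]
    have hinv2 : (a * ((Uc⁻¹ : Aˣ) : A)) * c = 1 := by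
      rw [← hccomm, hinv1]
    exact hnotunit ⟨⟨c, a * ((Uc⁻¹ : Aˣ) : A), hinv1, hinv2⟩, rfl⟩

end ASide

lemma RotAux.implements {θ : ℝ} {A : Type*} [CStarAlgebra A] (M : RotationAlgebraModel θ A)
    (β : A ≃⋆ₐ[ℂ] A) (z₁ z₂ : ℂ)
    (hβU : β (M.U : A) = z₁ • (M.U : A)) (hβV : β (M.V : A) = z₂ • (M.V : A))
    (n₁ n₂ : ℤ)
    (hz₁ : z₁ = Complex.exp (2 * Real.pi * Complex.I * θ) ^ n₁)
    (hz₂ : z₂ = Complex.exp (2 * Real.pi * Complex.I * θ) ^ n₂)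
    (x : A) :
    β x = ((M.U ^ (-n₂) * M.V ^ n₁ : unitary A) : A) * x
      * star ((M.U ^ (-n₂) * M.V ^ n₁ : unitary A) : A) := by
  have hγ : Complex.exp (2 * Real.pi * Complex.I * θ) ≠ 0 := Complex.exp_ne_zero _
  have hbu := RotAux.conj_left (Complex.exp (2 * Real.pi * Complex.I * θ)) hγ M.U M.V M.rel n₁
  have hrel' : (M.U : A) * (M.V : A)
      = (Complex.exp (2 * Real.pi * Complex.I * θ))⁻¹ • ((M.V : A) * (M.U : A)) := by
    rw [M.rel, smul_smul, inv_mul_cancel₀ hγ, one_smul]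
  have hav' := RotAux.conj_left (Complex.exp (2 * Real.pi * Complex.I * θ))⁻¹
    (inv_ne_zero hγ) M.V M.U hrel' (-n₂)
  have hav : ((M.U ^ (-n₂) : unitary A) : A) * (M.V : A)
      = Complex.exp (2 * Real.pi * Complex.I * θ) ^ n₂ •
        ((M.V : A) * ((M.U ^ (-n₂) : unitary A) : A)) := by
    have hco : ((Complex.exp (2 * Real.pi * Complex.I * θ))⁻¹) ^ (-n₂)
        = Complex.exp (2 * Real.pi * Complex.I * θ) ^ n₂ := by
      rw [inv_zpow, ← zpow_neg, neg_neg]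
    rw [hav', hco]
  have hau : ((M.U ^ (-n₂) : unitary A) : A) * (M.U : A)
      = (M.U : A) * ((M.U ^ (-n₂) : unitary A) : A) := by
    have h := (Commute.refl M.U).zpow_left (-n₂)
    exact congrArg (fun t : unitary A => (t : A)) h
  have hbv : ((M.V ^ n₁ : unitary A) : A) * (M.V : A)
      = (M.V : A) * ((M.V ^ n₁ : unitary A) : A) := by
    have h := (Commute.refl M.V).zpow_left n₁
    exact congrArg (fun t : unitary A => (t : A)) h
  have adU : ∀ (Wu : unitary A) (y : A) (c : ℂ),
      (Wu : A) * y = c • (y * (Wu : A)) → (Wu : A) * y * star (Wu : A) = c • y := by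
    intro Wu y c hrel
    rw [hrel, smul_mul_assoc, mul_assoc, Unitary.mul_star_self_of_mem Wu.prop, mul_one]
  have ad_mul : ∀ (W₁ W₂ : unitary A) (y : A),
      ((W₁ * W₂ : unitary A) : A) * y * star ((W₁ * W₂ : unitary A) : A)
        = (W₁ : A) * ((W₂ : A) * y * star (W₂ : A)) * star (W₁ : A) := by
    intro W₁ W₂ y
    have hcoe : ((W₁ * W₂ : unitary A) : A) = (W₁ : A) * (W₂ : A) := rfl
    rw [hcoe, star_mul]
    simp only [mul_assoc]
  have hconjU : ((M.U ^ (-n₂) * M.V ^ n₁ : unitary A) : A) * (M.U : A)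
      * star ((M.U ^ (-n₂) * M.V ^ n₁ : unitary A) : A) = z₁ • (M.U : A) := by
    rw [ad_mul, adU (M.V ^ n₁) (M.U : A) _ hbu, mul_smul_comm, smul_mul_assoc,
      adU (M.U ^ (-n₂)) (M.U : A) 1 (by rw [hau, one_smul]), one_smul, hz₁]
  have hconjV : ((M.U ^ (-n₂) * M.V ^ n₁ : unitary A) : A) * (M.V : A)
      * star ((M.U ^ (-n₂) * M.V ^ n₁ : unitary A) : A) = z₂ • (M.V : A) := by
    rw [ad_mul, adU (M.V ^ n₁) (M.V : A) 1 (by rw [hbv, one_smul]), one_smul,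
      adU (M.U ^ (-n₂)) (M.V : A) _ hav, hz₂]
  have hβcont : Continuous (β : A → A) := (StarAlgEquiv.isometry β).continuous
  set w₀ : A := ((M.U ^ (-n₂) * M.V ^ n₁ : unitary A) : A) with hw₀def
  have hw1 : w₀ * star w₀ = 1 := Unitary.mul_star_self_of_mem (M.U ^ (-n₂) * M.V ^ n₁ : unitary A).prop
  have hw2 : star w₀ * w₀ = 1 := Unitary.star_mul_self_of_mem (M.U ^ (-n₂) * M.V ^ n₁ : unitary A).prop
  have hS : IsClosed {y : A | β y = w₀ * y * star w₀} := by
    apply isClosed_eq hβcont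
    exact (continuous_const.mul continuous_id).mul continuous_const
  have hsub : ∀ y ∈ StarAlgebra.adjoin ℂ {(M.U : A), (M.V : A)},
      y ∈ {y : A | β y = w₀ * y * star w₀} := by
    intro y hy
    induction hy using StarAlgebra.adjoin_induction with
    | mem t ht =>
        simp only [Set.mem_insert_iff, Set.mem_singleton_iff] at ht
        rcases ht with rfl | rfl
        · exact hβU.trans hconjU.symm
        · exact hβV.trans hconjV.symm
    | algebraMap r =>
        show β (algebraMap ℂ A r) = w₀ * (algebraMap ℂ A r) * star w₀
        rw [Algebra.algebraMap_eq_smul_one, map_smul, map_one, mul_smul_comm, smul_mul_assoc,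
          mul_one, hw1]
    | add s t hs ht ihs iht =>
        show β (s + t) = w₀ * (s + t) * star w₀
        rw [map_add, ihs, iht, mul_add, add_mul]
    | mul s t hs ht ihs iht =>
        show β (s * t) = w₀ * (s * t) * star w₀
        rw [map_mul, ihs, iht]
        calc w₀ * s * star w₀ * (w₀ * t * star w₀)
            = w₀ * (s * ((star w₀ * w₀) * (t * star w₀))) := by simp only [mul_assoc]
          _ = w₀ * (s * t) * star w₀ := by rw [hw2, one_mul]; simp only [mul_assoc]
    | star s hs ihs =>
        show β (star s) = w₀ * (star s) * star w₀
        rw [map_star, ihs]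
        simp only [star_mul, star_star, mul_assoc]
  have hx2 : x ∈ closure ((StarAlgebra.adjoin ℂ {(M.U : A), (M.V : A)}) : Set A) := by
    rw [← StarSubalgebra.topologicalClosure_coe, M.generated]
    trivial
  exact closure_minimal hsub hS hx2

/-- **Inner automorphisms of the irrational rotation algebra among the gauge action**:
`β_{(z₁,z₂)}` is inner iff `z₁, z₂ ∈ e^{2πi(θℤ+ℤ)}`, and any implementing unitary is
`λ UⁿVᵐ`. -/
theorem rotation_algebra_gauge_action_inner_iff
    {θ : ℝ} (hθ : Irrational θ) (hθ0 : 0 ≤ θ) (hθ1 : θ ≤ 1)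
    {A : Type*} [CStarAlgebra A] (M : RotationAlgebraModel θ A)
    (z₁ z₂ : ℂ) (hz₁ : ‖z₁‖ = 1) (hz₂ : ‖z₂‖ = 1)
    (β : A ≃⋆ₐ[ℂ] A)
    (hβU : β (M.U : A) = z₁ • (M.U : A)) (hβV : β (M.V : A) = z₂ • (M.V : A)) :
    ((∃ W : unitary A, ∀ x : A, β x = (W : A) * x * star (W : A)) ↔
      ((∃ n m : ℤ, z₁ = Complex.exp (2 * Real.pi * Complex.I * (n * θ + m))) ∧
       (∃ n m : ℤ, z₂ = Complex.exp (2 * Real.pi * Complex.I * (n * θ + m))))) ∧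
    (∀ W : unitary A, (∀ x : A, β x = (W : A) * x * star (W : A)) →
      ∃ (lam : ℂ) (n m : ℤ), ‖lam‖ = 1 ∧
        (W : A) = lam • ((M.U ^ n * M.V ^ m : unitary A) : A)) := by
  classical
  obtain ⟨Φ₁, hΦ₁U, hΦ₁V⟩ := M.universal (RotAux.Hs →L[ℂ] RotAux.Hs) inferInstance
    (RotAux.diagU θ) (RotAux.shiftU 1) RotAux.rep1_rel
  obtain ⟨Φ₂, hΦ₂U, hΦ₂V⟩ := M.universal (RotAux.Hs →L[ℂ] RotAux.Hs) inferInstance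
    (RotAux.shiftU (-1)) (RotAux.diagU θ) RotAux.rep2_rel
  have h1A : (1 : A) ≠ 0 := by
    intro h
    have := congrArg Φ₁ h
    rw [map_one, map_zero] at this
    exact RotAux.one_ne_zero_clm this
  haveI : Nontrivial A := ⟨⟨1, 0, h1A⟩⟩
  have conv : ∀ n m : ℤ, Complex.exp (2 * Real.pi * Complex.I * ((n : ℂ) * (θ : ℂ) + (m : ℂ)))
      = Complex.exp (2 * Real.pi * Complex.I * θ) ^ n := by
    intro n m
    rw [show (2 * (Real.pi : ℂ) * Complex.I * ((n : ℂ) * (θ : ℂ) + (m : ℂ)) : ℂ)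
        = (n : ℂ) * (2 * (Real.pi : ℂ) * Complex.I * (θ : ℂ))
          + (m : ℂ) * (2 * (Real.pi : ℂ) * Complex.I) by ring]
    rw [Complex.exp_add, Complex.exp_int_mul_two_pi_mul_I, mul_one, Complex.exp_int_mul]
  have forward : ∀ W : unitary A, (∀ x : A, β x = (W : A) * x * star (W : A)) →
      (∃ n : ℤ, z₁ = Complex.exp (2 * Real.pi * Complex.I * θ) ^ n) ∧
      (∃ n : ℤ, z₂ = Complex.exp (2 * Real.pi * Complex.I * θ) ^ n) := by
    intro W hW
    have hWu : (W : A) * (M.U : A) = z₁ • ((M.U : A) * (W : A)) := by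
      have h1 : (W : A) * (M.U : A) * star (W : A) = z₁ • (M.U : A) := (hW _).symm.trans hβU
      calc (W : A) * (M.U : A)
          = ((W : A) * (M.U : A) * star (W : A)) * (W : A) := by
            rw [mul_assoc ((W : A) * (M.U : A)), Unitary.star_mul_self_of_mem W.prop, mul_one]
        _ = (z₁ • (M.U : A)) * (W : A) := by rw [h1]
        _ = z₁ • ((M.U : A) * (W : A)) := smul_mul_assoc _ _ _
    have hWv : (W : A) * (M.V : A) = z₂ • ((M.V : A) * (W : A)) := by
      have h1 : (W : A) * (M.V : A) * star (W : A) = z₂ • (M.V : A) := (hW _).symm.trans hβV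
      calc (W : A) * (M.V : A)
          = ((W : A) * (M.V : A) * star (W : A)) * (W : A) := by
            rw [mul_assoc ((W : A) * (M.V : A)), Unitary.star_mul_self_of_mem W.prop, mul_one]
        _ = (z₂ • (M.V : A)) * (W : A) := by rw [h1]
        _ = z₂ • ((M.V : A) * (W : A)) := smul_mul_assoc _ _ _
    have hWnorm1 : Φ₁ (W : A) * star (Φ₁ (W : A)) = 1 := by
      rw [← map_star, ← map_mul, Unitary.mul_star_self_of_mem W.prop, map_one]
    have hWnorm2 : Φ₂ (W : A) * star (Φ₂ (W : A)) = 1 := by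
      rw [← map_star, ← map_mul, Unitary.mul_star_self_of_mem W.prop, map_one]
    constructor
    · have h2 : Φ₁ (W : A) * (RotAux.diagU θ : RotAux.Hs →L[ℂ] RotAux.Hs)
          = z₁ • ((RotAux.diagU θ : RotAux.Hs →L[ℂ] RotAux.Hs) * Φ₁ (W : A)) := by
        have := congrArg Φ₁ hWu
        rw [map_mul, map_smul, map_mul, hΦ₁U] at this
        exact this
      exact RotAux.diag_extract hθ _ hWnorm1 z₁ h2
    · have h2 : Φ₂ (W : A) * (RotAux.diagU θ : RotAux.Hs →L[ℂ] RotAux.Hs)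
          = z₂ • ((RotAux.diagU θ : RotAux.Hs →L[ℂ] RotAux.Hs) * Φ₂ (W : A)) := by
        have := congrArg Φ₂ hWv
        rw [map_mul, map_smul, map_mul, hΦ₂V] at this
        exact this
      exact RotAux.diag_extract hθ _ hWnorm2 z₂ h2
  refine ⟨⟨?_, ?_⟩, ?_⟩
  · rintro ⟨W, hW⟩
    obtain ⟨⟨n₁, hn₁⟩, ⟨n₂, hn₂⟩⟩ := forward W hW
    exact ⟨⟨n₁, 0, by rw [hn₁]; exact_mod_cast (conv n₁ 0).symm⟩,
      ⟨n₂, 0, by rw [hn₂]; exact_mod_cast (conv n₂ 0).symm⟩⟩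
  · rintro ⟨⟨n₁, m₁, h₁⟩, ⟨n₂, m₂, h₂⟩⟩
    refine ⟨M.U ^ (-n₂) * M.V ^ n₁, ?_⟩
    exact RotAux.implements M β z₁ z₂ hβU hβV n₁ n₂
      (by rw [h₁]; exact_mod_cast conv n₁ m₁) (by rw [h₂]; exact_mod_cast conv n₂ m₂)
  · intro W hW
    obtain ⟨⟨n₁, hn₁⟩, ⟨n₂, hn₂⟩⟩ := forward W hW
    have himp := RotAux.implements M β z₁ z₂ hβU hβV n₁ n₂ hn₁ hn₂
    set W₀ : unitary A := M.U ^ (-n₂) * M.V ^ n₁ with hW₀def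
    have hCunit : star (star (W₀ : A) * (W : A)) * (star (W₀ : A) * (W : A)) = 1 := by
      rw [star_mul, star_star]
      calc star (W : A) * (W₀ : A) * (star (W₀ : A) * (W : A))
          = star (W : A) * (((W₀ : A) * star (W₀ : A)) * (W : A)) := by simp only [mul_assoc]
        _ = 1 := by rw [Unitary.mul_star_self_of_mem W₀.prop, one_mul, Unitary.star_mul_self_of_mem W.prop]
    have hCfix : ∀ x : A, (star (W₀ : A) * (W : A)) * x * star (star (W₀ : A) * (W : A)) = x := by
      intro x
      rw [star_mul, star_star]
      have h1 : (W : A) * x * star (W : A) = (W₀ : A) * x * star (W₀ : A) :=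
        (hW x).symm.trans (himp x)
      calc star (W₀ : A) * (W : A) * x * (star (W : A) * (W₀ : A))
          = star (W₀ : A) * ((W : A) * x * star (W : A)) * (W₀ : A) := by simp only [mul_assoc]
        _ = star (W₀ : A) * ((W₀ : A) * x * star (W₀ : A)) * (W₀ : A) := by rw [h1]
        _ = (star (W₀ : A) * (W₀ : A)) * x * ((star (W₀ : A)) * (W₀ : A)) := by
            simp only [mul_assoc]
        _ = x := by rw [Unitary.star_mul_self_of_mem W₀.prop, one_mul, mul_one]
    have hCcomm : ∀ x : A, (star (W₀ : A) * (W : A)) * x = x * (star (W₀ : A) * (W : A)) := by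
      intro x
      calc (star (W₀ : A) * (W : A)) * x
          = ((star (W₀ : A) * (W : A)) * x * star (star (W₀ : A) * (W : A)))
            * (star (W₀ : A) * (W : A)) := by
            rw [mul_assoc ((star (W₀ : A) * (W : A)) * x), hCunit, mul_one]
        _ = x * (star (W₀ : A) * (W : A)) := by rw [hCfix x]
    obtain ⟨μ, hμ⟩ := RotAux.central_scalar M.simple (star (W₀ : A) * (W : A)) hCcomm
    have hWeq : (W : A) = μ • (W₀ : A) := by
      have h3 : (W₀ : A) * (star (W₀ : A) * (W : A)) = (W : A) := by
        rw [← mul_assoc, Unitary.mul_star_self_of_mem W₀.prop, one_mul]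
      rw [← h3, hμ, mul_smul_comm, mul_one]
    have hnW : ‖(W : A)‖ = 1 := CStarRing.norm_coe_unitary W
    have hnW₀ : ‖(W₀ : A)‖ = 1 := CStarRing.norm_coe_unitary W₀
    have hμnorm : ‖μ‖ = 1 := by
      rw [hWeq, norm_smul, hnW₀, mul_one] at hnW
      exact hnW
    exact ⟨μ, -n₂, n₁, hμnorm, hWeq⟩
end
end

section
/- Let 𝔄 be a unital C*-algebra, α a *-automorphism of 𝔄, q a positive integer, U ∈ 𝔄 a unitary with α^q = Ad U, and suppose α(U) = γU for some γ ∈ 𝕋 with γ ≠ 1. Then there is no irreducible representation π of 𝔄 on a Hilbert space H together with a unitary V on H satisfying V π(x) V* = π(α(x)) for all x ∈ 𝔄; in particular 𝔄 admits no α-invariant pure state. -/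
open scoped ComplexOrder

/-- A state on a C*-algebra: a positive linear functional of norm one. -/
def IsState {A : Type*} [CStarAlgebra A] (φ : A →L[ℂ] ℂ) : Prop :=
  (∀ x : A, 0 ≤ φ (star x * x)) ∧ ‖φ‖ = 1

/-- A pure state: an extreme point of the state space. -/
def IsPureState {A : Type*} [CStarAlgebra A] (φ : A →L[ℂ] ℂ) : Prop :=
  IsState φ ∧ ∀ (ψ₁ ψ₂ : A →L[ℂ] ℂ) (t : ℝ), IsState ψ₁ → IsState ψ₂ →
    0 < t → t < 1 → φ = t • ψ₁ + (1 - t) • ψ₂ → ψ₁ = φ ∧ ψ₂ = φ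

/-- The `n`-th power of an automorphism, `n : ℕ`. -/
noncomputable def autNPow {A : Type*} [CStarAlgebra A] (α : A ≃⋆ₐ[ℂ] A) : ℕ → A ≃⋆ₐ[ℂ] A
  | 0 => StarAlgEquiv.refl ℂ A
  | n + 1 => (autNPow α n).trans α

/-- A bundled complex Hilbert space. -/
structure HilbertC where
  carrier : Type
  [nacg : NormedAddCommGroup carrier]
  [ips : InnerProductSpace ℂ carrier]
  [cs : CompleteSpace carrier]

attribute [instance] HilbertC.nacg HilbertC.ips HilbertC.cs

section PosFunctional
variable {A : Type*} [CStarAlgebra A]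

variable {A : Type*} [CStarAlgebra A]

lemma texp (x : A) (t : ℂ) : star (x + t • 1) * (x + t • 1)
    = star x * x + t • star x + (starRingEnd ℂ t) • x + (t * starRingEnd ℂ t) • 1 := by
  simp only [star_add, star_smul, star_one, Complex.star_def, add_mul, mul_add,
    smul_mul_assoc, mul_smul_comm, smul_smul, mul_one, one_mul, smul_add]
  abel

lemma posFun_herm (f : A →L[ℂ] ℂ) (hf : ∀ x : A, 0 ≤ f (star x * x)) (a : A) :
    f (star a) = starRingEnd ℂ (f a) := by
  have him : ∀ x : A, (f (star x * x)).im = 0 := fun x =>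
    ((Complex.le_def.mp (hf x)).2).symm
  have h1 := him (a + (1:ℂ) • 1)
  have h2 := him (a + Complex.I • 1)
  rw [texp] at h1 h2
  simp only [map_add, map_smul, smul_eq_mul, map_one, Complex.conj_I, Complex.add_im,
    Complex.mul_im, Complex.one_re, Complex.one_im, Complex.I_re, Complex.I_im,
    Complex.neg_re, Complex.neg_im, neg_mul, mul_neg, zero_mul, one_mul, zero_add,
    add_zero, mul_one, neg_neg, mul_zero] at h1 h2
  have himaa := him a
  have him1 : (f 1).im = 0 := by simpa using him 1
  rw [himaa] at h1 h2
  rw [him1] at h1 h2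
  apply Complex.ext
  · simp only [Complex.conj_re]; linarith
  · simp only [Complex.conj_im]; linarith

lemma posFun_sq_bound (f : A →L[ℂ] ℂ) (hf : ∀ x : A, 0 ≤ f (star x * x)) (x : A) :
    ‖f x‖^2 ≤ (f 1).re * (‖f‖ * ‖x‖^2) := by
  have h1nonneg : (0:ℂ) ≤ f 1 := by simpa using hf 1
  have hr : 0 ≤ (f 1).re := by
    have := (Complex.le_def.mp h1nonneg).1; simpa using this
  have h1im : (f 1).im = 0 := ((Complex.le_def.mp h1nonneg).2).symm
  have h1eq : f 1 = ((f 1).re : ℂ) := Complex.ext rfl h1im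
  set r : ℝ := (f 1).re with hrdef
  set z : ℂ := f x with hzdef
  set N : ℝ := ‖z‖^2 with hNdef
  have hNnn : 0 ≤ N := sq_nonneg _
  have hxxnn : (0:ℂ) ≤ f (star x * x) := hf x
  have hRim : (f (star x * x)).im = 0 := ((Complex.le_def.mp hxxnn).2).symm
  have hReq : f (star x * x) = (((f (star x * x)).re : ℝ) : ℂ) := Complex.ext rfl hRim
  set R : ℝ := (f (star x * x)).re with hRdef
  have hRnn : 0 ≤ R := by
    have := (Complex.le_def.mp hxxnn).1; simpa using this
  have hmono : R ≤ ‖f‖ * ‖x‖^2 := by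
    have h1 : R ≤ ‖f (star x * x)‖ := Complex.re_le_norm _
    have h2 : ‖f (star x * x)‖ ≤ ‖f‖ * ‖star x * x‖ := f.le_opNorm _
    have h3 : ‖star x * x‖ = ‖x‖^2 := by rw [CStarRing.norm_star_mul_self]; ring
    rw [h3] at h2
    linarith
  have hzz : z * starRingEnd ℂ z = ((N : ℝ) : ℂ) := by
    rw [Complex.mul_conj]
    norm_cast
    rw [Complex.normSq_eq_norm_sq, hNdef]
  have key : ∀ s : ℝ, 0 ≤ R - 2 * s * N + s^2 * N * r := by
    intro s
    have hq := hf (x + (-(s:ℂ) * z) • 1)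
    rw [texp] at hq
    simp only [map_add, map_smul, smul_eq_mul] at hq
    rw [posFun_herm f hf x, ← hzdef, h1eq, hReq] at hq
    have hconj : starRingEnd ℂ (-(s:ℂ) * z) = -(s:ℂ) * starRingEnd ℂ z := by
      rw [map_mul, map_neg, Complex.conj_ofReal]
    rw [hconj] at hq
    have hE : (((R:ℝ) : ℂ)) + (-(s:ℂ) * z) * starRingEnd ℂ z + (-(s:ℂ) * starRingEnd ℂ z) * z
        + ((-(s:ℂ) * z) * (-(s:ℂ) * starRingEnd ℂ z)) * ((r:ℝ):ℂ)
        = ((R - 2 * s * N + s^2 * N * r : ℝ) : ℂ) := by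
      have e : (((R:ℝ) : ℂ)) + (-(s:ℂ) * z) * starRingEnd ℂ z + (-(s:ℂ) * starRingEnd ℂ z) * z
          + ((-(s:ℂ) * z) * (-(s:ℂ) * starRingEnd ℂ z)) * ((r:ℝ):ℂ)
          = ((R:ℝ):ℂ) - 2 * (s:ℂ) * (z * starRingEnd ℂ z)
            + (s:ℂ)^2 * (z * starRingEnd ℂ z) * ((r:ℝ):ℂ) := by ring
      rw [e, hzz]
      push_cast
      ring
    rw [hE] at hq
    exact Complex.zero_le_real.mp hq
  show N ≤ r * (‖f‖ * ‖x‖^2)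
  rcases eq_or_ne z 0 with hz0 | hz0
  · have : N = 0 := by rw [hNdef, hz0, norm_zero]; ring
    rw [this]
    exact mul_nonneg hr (mul_nonneg (norm_nonneg f) (sq_nonneg _))
  · have hNpos : 0 < N := by
      have : 0 < ‖z‖ := norm_pos_iff.mpr hz0
      rw [hNdef]; exact pow_pos this 2
    rcases eq_or_lt_of_le hr with hr0 | hrpos
    · exfalso
      have hk := key ((R + 1) / (2 * N))
      rw [← hr0] at hk
      have h2N : (R + 1) / (2 * N) * N = (R + 1) / 2 := by field_simp
      nlinarith
    · have hk := key (1/r)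
      have hu : (1/r) * r = 1 := one_div_mul_cancel hrpos.ne'
      have hexpand : r * (R - 2*(1/r)*N + (1/r)^2*N*r)
          = r*R - 2*((1/r)*r)*N + ((1/r)*r)^2*N := by ring
      have h3 : 0 ≤ r * R - N := by
        have h2 := mul_nonneg hrpos.le hk
        rw [hexpand, hu] at h2
        linarith
      nlinarith [hmono, hrpos]

lemma posFun_norm [Nontrivial A] (f : A →L[ℂ] ℂ) (hf : ∀ x : A, 0 ≤ f (star x * x)) :
    ‖f‖ = (f 1).re := by
  have h1nonneg : (0:ℂ) ≤ f 1 := by simpa using hf 1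
  have hr : 0 ≤ (f 1).re := by
    have := (Complex.le_def.mp h1nonneg).1; simpa using this
  have h1im : (f 1).im = 0 := ((Complex.le_def.mp h1nonneg).2).symm
  have h1eq : f 1 = ((f 1).re : ℂ) := Complex.ext rfl h1im
  set r : ℝ := (f 1).re with hrdef
  have hlb : r ≤ ‖f‖ := by
    have h2 := f.le_opNorm 1
    rw [norm_one, mul_one, h1eq] at h2
    calc r = |r| := (abs_of_nonneg hr).symm
    _ = ‖((r:ℝ):ℂ)‖ := by rw [Complex.norm_real, Real.norm_eq_abs]
    _ ≤ ‖f‖ := h2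
  have hub : ‖f‖ ≤ Real.sqrt (r * ‖f‖) := by
    refine f.opNorm_le_bound (Real.sqrt_nonneg _) fun x => ?_
    have hsq := posFun_sq_bound f hf x
    have h2 : (Real.sqrt (r*‖f‖) * ‖x‖)^2 = r*‖f‖*‖x‖^2 := by
      rw [mul_pow, Real.sq_sqrt (mul_nonneg hr (norm_nonneg f))]
    nlinarith [norm_nonneg (f x), norm_nonneg x,
      mul_nonneg (Real.sqrt_nonneg (r*‖f‖)) (norm_nonneg x)]
  have hub2 : ‖f‖^2 ≤ r * ‖f‖ := by
    have h2 := pow_le_pow_left₀ (norm_nonneg f) hub 2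
    rwa [Real.sq_sqrt (mul_nonneg hr (norm_nonneg f))] at h2
  refine le_antisymm ?_ hlb
  rcases eq_or_lt_of_le (norm_nonneg f) with h0 | hpos
  · rw [← h0]; exact hr
  · nlinarith [hub2, hpos]

lemma pure_centralizer_kill [Nontrivial A] (φ : A →L[ℂ] ℂ)
    (hpos : ∀ x : A, 0 ≤ φ (star x * x)) (hφ1 : φ 1 = 1)
    (hpure : ∀ (ψ₁ ψ₂ : A →L[ℂ] ℂ) (t : ℝ), IsState ψ₁ → IsState ψ₂ →
      0 < t → t < 1 → φ = t • ψ₁ + (1 - t) • ψ₂ → ψ₁ = φ ∧ ψ₂ = φ)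
    (e : A) (he : φ e = 0)
    (hp1 : ∀ x : A, 0 ≤ φ ((1 + e) * (star x * x)))
    (hp2 : ∀ x : A, 0 ≤ φ ((1 - e) * (star x * x))) :
    ∀ x : A, φ (e * x) = 0 := by
  set ψ₁ : A →L[ℂ] ℂ := φ.comp (ContinuousLinearMap.mul ℂ A (1 + e)) with hψ₁
  set ψ₂ : A →L[ℂ] ℂ := φ.comp (ContinuousLinearMap.mul ℂ A (1 - e)) with hψ₂
  have hψ₁app : ∀ x : A, ψ₁ x = φ ((1 + e) * x) := fun x => rfl
  have hψ₂app : ∀ x : A, ψ₂ x = φ ((1 - e) * x) := fun x => rfl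
  have hψ₁pos : ∀ x : A, 0 ≤ ψ₁ (star x * x) := fun x => by rw [hψ₁app]; exact hp1 x
  have hψ₂pos : ∀ x : A, 0 ≤ ψ₂ (star x * x) := fun x => by rw [hψ₂app]; exact hp2 x
  have hψ₁1 : ψ₁ 1 = 1 := by rw [hψ₁app, mul_one, map_add, hφ1, he, add_zero]
  have hψ₂1 : ψ₂ 1 = 1 := by rw [hψ₂app, mul_one, map_sub, hφ1, he, sub_zero]
  have hs₁ : IsState ψ₁ := ⟨hψ₁pos, by rw [posFun_norm ψ₁ hψ₁pos, hψ₁1, Complex.one_re]⟩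
  have hs₂ : IsState ψ₂ := ⟨hψ₂pos, by rw [posFun_norm ψ₂ hψ₂pos, hψ₂1, Complex.one_re]⟩
  have hdecomp : φ = ((1:ℝ)/2) • ψ₁ + (1 - (1:ℝ)/2) • ψ₂ := by
    ext x
    simp only [ContinuousLinearMap.add_apply, ContinuousLinearMap.coe_smul',
      Pi.smul_apply, hψ₁app, hψ₂app, add_mul, sub_mul, one_mul, map_add, map_sub]
    rw [Complex.real_smul, Complex.real_smul]
    push_cast
    ring
  obtain ⟨h₁, -⟩ := hpure ψ₁ ψ₂ ((1:ℝ)/2) hs₁ hs₂ (by norm_num) (by norm_num) hdecomp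
  intro x
  have h := congrArg (fun g : A →L[ℂ] ℂ => g x) h₁
  simp only [hψ₁app, add_mul, one_mul, map_add] at h
  -- h : φ x + φ (e * x) = φ x
  linear_combination h


end PosFunctional

/-- **Connes-type obstruction**: if `α^q = Ad U` and `α(U) = γU` with `γ ≠ 1`, then `α` admits
no covariant irreducible representation, and hence no `α`-invariant pure state. -/
theorem no_covariant_irreducible_rep_of_obstruction
    {A : Type*} [CStarAlgebra A] (α : A ≃⋆ₐ[ℂ] A)
    (q : ℕ) (hq : 0 < q) (U : unitary A)
    (hAd : ∀ x : A, autNPow α q x = (U : A) * x * star (U : A))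
    (γ : ℂ) (hγnorm : ‖γ‖ = 1) (hγone : γ ≠ 1)
    (hαU : α (U : A) = γ • (U : A)) :
    (¬∃ (Hs : HilbertC) (π : A →⋆ₐ[ℂ] (Hs.carrier →L[ℂ] Hs.carrier))
        (V : Hs.carrier →L[ℂ] Hs.carrier),
        Nontrivial Hs.carrier ∧ V ∈ unitary (Hs.carrier →L[ℂ] Hs.carrier) ∧
        (∀ T : Hs.carrier →L[ℂ] Hs.carrier, (∀ x, T * π x = π x * T) → ∃ c : ℂ, T = c • 1) ∧
        (∀ x : A, V * π x * star V = π (α x))) ∧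
    ¬∃ φ : A →L[ℂ] ℂ, IsPureState φ ∧ ∀ x, φ (α x) = φ x := by
  have hγ' : starRingEnd ℂ γ ≠ 1 := fun h => hγone (by
    have h2 := congrArg (starRingEnd ℂ) h
    rwa [Complex.conj_conj, map_one] at h2)
  constructor
  · -- Part 1 : no covariant irreducible representation
    rintro ⟨Hs, π, V, hnt, hVu, hirr, hcov⟩
    have hone : (1 : Hs.carrier →L[ℂ] Hs.carrier) ≠ 0 := by
      obtain ⟨v, hv⟩ := exists_ne (0 : Hs.carrier)
      intro h
      apply hv
      have h2 := congrArg (fun g : Hs.carrier →L[ℂ] Hs.carrier => g v) h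
      simpa using h2
    have hVsV : star V * V = 1 := Unitary.star_mul_self_of_mem hVu
    have hVVs : V * star V = 1 := Unitary.mul_star_self_of_mem hVu
    have hmove : ∀ x : A, V * π x = π (α x) * V := by
      intro x
      have h := congrArg (fun T => T * V) (hcov x)
      simpa [mul_assoc, hVsV] using h
    have hmoveN : ∀ n : ℕ, ∀ x : A, V ^ n * π x = π (autNPow α n x) * V ^ n := by
      intro n
      induction n with
      | zero => intro x; simp [autNPow]
      | succ n ih =>
        intro x
        rw [pow_succ']
        calc V * V ^ n * π x = V * (π (autNPow α n x) * V ^ n) := by rw [mul_assoc, ih]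
        _ = (V * π (autNPow α n x)) * V ^ n := by rw [mul_assoc]
        _ = π (α (autNPow α n x)) * V * V ^ n := by rw [hmove]
        _ = π (autNPow α (n+1) x) * (V * V ^ n) := by
              rw [mul_assoc]
              rfl
    set T : Hs.carrier →L[ℂ] Hs.carrier := π (star (U : A)) * V ^ q with hT
    have hTcomm : ∀ x : A, T * π x = π x * T := by
      intro x
      calc T * π x = π (star (U : A)) * (V ^ q * π x) := by rw [hT, mul_assoc]
      _ = π (star (U : A)) * (π (autNPow α q x) * V ^ q) := by rw [hmoveN q x]
      _ = π (star (U : A)) * (π ((U : A) * x * star (U : A)) * V ^ q) := by rw [hAd x]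
      _ = π (star (U : A) * ((U : A) * x * star (U : A))) * V ^ q := by
            rw [← mul_assoc, ← map_mul]
      _ = π (x * star (U : A)) * V ^ q := by
            congr 2
            calc star (U:A) * ((U : A) * x * star (U : A))
                = (star (U:A) * (U:A)) * (x * star (U:A)) := by
                  simp only [mul_assoc]
            _ = x * star (U:A) := by rw [Unitary.star_mul_self_of_mem U.prop, one_mul]
      _ = π x * T := by rw [map_mul, hT, mul_assoc]
    obtain ⟨c, hc⟩ := hirr T hTcomm
    have hTunit : star T * T = 1 := by
      rw [hT, star_mul, ← map_star, star_star]
      calc star (V ^ q) * π (U:A) * (π (star (U:A)) * V ^ q)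
          = star (V ^ q) * (π ((U:A) * star (U:A)) * V ^ q) := by
            rw [map_mul]
            simp only [mul_assoc]
      _ = star (V ^ q) * V ^ q := by
            rw [Unitary.mul_star_self_of_mem U.prop, map_one, one_mul]
      _ = 1 := Unitary.star_mul_self_of_mem (pow_mem hVu q)
    have hcc : starRingEnd ℂ c * c = 1 := by
      rw [hc, star_smul, smul_mul_smul, star_one, one_mul, Complex.star_def] at hTunit
      have h2 : (starRingEnd ℂ c * c) • (1 : Hs.carrier →L[ℂ] Hs.carrier)
          = (1:ℂ) • 1 := by rw [one_smul]; exact hTunit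
      have h3 := sub_eq_zero.mpr h2
      rw [← sub_smul] at h3
      rcases smul_eq_zero.mp h3 with h4 | h4
      · exact sub_eq_zero.mp h4
      · exact absurd h4 hone
    have hcne : c ≠ 0 := by
      intro h
      rw [h, mul_zero] at hcc
      exact zero_ne_one hcc
    have hcommV : V * V ^ q = V ^ q * V := by rw [← pow_succ', ← pow_succ]
    have hVT : V * T = starRingEnd ℂ γ • (T * V) := by
      calc V * T = (V * π (star (U:A))) * V ^ q := by rw [hT, mul_assoc]
      _ = (π (α (star (U:A))) * V) * V ^ q := by rw [hmove]
      _ = (π (starRingEnd ℂ γ • star (U:A)) * V) * V ^ q := by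
            rw [map_star, hαU, star_smul, Complex.star_def]
      _ = starRingEnd ℂ γ • (π (star (U:A)) * V * V ^ q) := by
            rw [map_smul, smul_mul_assoc, smul_mul_assoc]
      _ = starRingEnd ℂ γ • (T * V) := by rw [mul_assoc, hcommV, hT, mul_assoc]
    have hfin : c • V = (starRingEnd ℂ γ * c) • V := by
      have h1 : V * T = c • V := by rw [hc, mul_smul_comm, mul_one]
      have h2 : T * V = c • V := by rw [hc, smul_mul_assoc, one_mul]
      rw [h1, h2, smul_smul] at hVT
      exact hVT
    have hVne : V ≠ 0 := by
      intro h
      rw [h, mul_zero] at hVsV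
      exact hone hVsV.symm
    have h5 := sub_eq_zero.mpr hfin
    rw [← sub_smul] at h5
    rcases smul_eq_zero.mp h5 with h6 | h6
    · have h7 : c * (1 - starRingEnd ℂ γ) = 0 := by linear_combination h6
      rcases mul_eq_zero.mp h7 with h8 | h8
      · exact hcne h8
      · exact hγ' (by linear_combination -h8)
    · exact hVne h6
  · -- Part 2 : no invariant pure state
    rintro ⟨φ, ⟨⟨hpos, hnorm⟩, hpure⟩, hinv⟩
    have hA : Nontrivial A := by
      by_contra h
      rw [not_nontrivial_iff_subsingleton] at h
      have h0 : φ = 0 := by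
        ext x
        rw [Subsingleton.elim x (0:A)]
        simp
      rw [h0, norm_zero] at hnorm
      exact zero_ne_one hnorm
    have hφ1 : φ 1 = 1 := by
      have h := posFun_norm φ hpos
      rw [hnorm] at h
      have him : (φ 1).im = 0 := ((Complex.le_def.mp (by simpa using hpos 1)).2).symm
      apply Complex.ext
      · rw [Complex.one_re]; exact h.symm
      · rw [Complex.one_im]; exact him
    have hinvN : ∀ n : ℕ, ∀ x : A, φ (autNPow α n x) = φ x := by
      intro n
      induction n with
      | zero => intro x; rfl
      | succ n ih =>
        intro x
        rw [show autNPow α (n+1) = (autNPow α n).trans α from rfl,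
          StarAlgEquiv.trans_apply, hinv, ih]
    have hAdφ : ∀ x : A, φ ((U:A) * x * star (U:A)) = φ x := fun x => by
      rw [← hAd x]; exact hinvN q x
    have hcen : ∀ y : A, φ ((U:A) * y) = φ (y * (U:A)) := by
      intro y
      have h := hAdφ (y * (U:A))
      have e : (U:A) * (y * (U:A)) * star (U:A) = (U:A) * y := by
        calc (U:A) * (y * (U:A)) * star (U:A) = ((U:A) * y) * ((U:A) * star (U:A)) := by
              simp only [mul_assoc]
        _ = (U:A) * y := by rw [Unitary.mul_star_self_of_mem U.prop, mul_one]
      rw [e] at h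
      exact h
    have hcens : ∀ y : A, φ (star (U:A) * y) = φ (y * star (U:A)) := by
      intro y
      have h := hAdφ (star (U:A) * y)
      have e : (U:A) * (star (U:A) * y) * star (U:A) = y * star (U:A) := by
        rw [← mul_assoc, Unitary.mul_star_self_of_mem U.prop, one_mul]
      rw [e] at h
      exact h.symm
    have hU0 : φ (U:A) = 0 := by
      have h := hinv (U:A)
      rw [hαU, map_smul, smul_eq_mul] at h
      have h2 : (γ - 1) * φ (U:A) = 0 := by linear_combination h
      rcases mul_eq_zero.mp h2 with h3 | h3
      · exact absurd (by linear_combination h3) hγone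
      · exact h3
    have hUs0 : φ (star (U:A)) = 0 := by
      have h := hinv (star (U:A))
      rw [map_star, hαU, star_smul, Complex.star_def, map_smul, smul_eq_mul] at h
      have h2 : (starRingEnd ℂ γ - 1) * φ (star (U:A)) = 0 := by linear_combination h
      rcases mul_eq_zero.mp h2 with h3 | h3
      · exact absurd (by linear_combination h3) hγ'
      · exact h3
    have hcentral : ∀ v : A, (∀ y, φ (v * y) = φ (y * v)) →
        ∀ x : A, 0 ≤ φ ((v * star v) * (star x * x)) := by
      intro v hv x
      have e1 : (v * star v) * (star x * x) = v * (star v * (star x * x)) := by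
        simp only [mul_assoc]
      rw [e1, hv]
      have e2 : (star v * (star x * x)) * v = star (x * v) * (x * v) := by
        rw [star_mul]
        simp only [mul_assoc]
      rw [e2]
      exact hpos _
    have htwoinv : ((2:ℂ)⁻¹) • ((1:A) + 1) = 1 := by
      rw [← two_smul ℂ (1:A), smul_smul, inv_mul_cancel₀ (two_ne_zero), one_smul]
    have h2innn : (0:ℂ) ≤ (2:ℂ)⁻¹ := by
      rw [Complex.le_def]
      norm_num
    -- first decomposition : real part of U
    set b : A := (2:ℂ)⁻¹ • ((U:A) + star (U:A)) with hbdef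
    have hb0 : φ b = 0 := by
      rw [hbdef, map_smul, map_add, hU0, hUs0, add_zero, smul_zero]
    have hv₁ : ∀ y, φ ((1 + (U:A)) * y) = φ (y * (1 + (U:A))) := by
      intro y
      simp only [add_mul, mul_add, one_mul, mul_one, map_add]
      rw [hcen y]
    have hv₂ : ∀ y, φ ((1 - (U:A)) * y) = φ (y * (1 - (U:A))) := by
      intro y
      simp only [sub_mul, mul_sub, one_mul, mul_one, map_sub]
      rw [hcen y]
    have i1 : (1:A) + b = (2:ℂ)⁻¹ • ((1 + (U:A)) * star (1 + (U:A))) := by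
      have hprod : (1 + (U:A)) * star (1 + (U:A)) = ((1:A) + 1) + ((U:A) + star (U:A)) := by
        simp only [star_add, star_one, mul_add, add_mul, one_mul, mul_one,
          Unitary.mul_star_self_of_mem U.prop]
        abel
      rw [hprod, smul_add, htwoinv, hbdef]
    have i2 : (1:A) - b = (2:ℂ)⁻¹ • ((1 - (U:A)) * star (1 - (U:A))) := by
      have hprod : (1 - (U:A)) * star (1 - (U:A)) = ((1:A) + 1) - ((U:A) + star (U:A)) := by
        simp only [star_sub, star_one, mul_sub, sub_mul, one_mul, mul_one,
          Unitary.mul_star_self_of_mem U.prop]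
        abel
      rw [hprod, smul_sub, htwoinv, hbdef]
    have hp1 : ∀ x : A, 0 ≤ φ ((1 + b) * (star x * x)) := by
      intro x
      rw [i1, smul_mul_assoc, map_smul, smul_eq_mul]
      exact mul_nonneg h2innn (hcentral (1 + (U:A)) hv₁ x)
    have hp2 : ∀ x : A, 0 ≤ φ ((1 - b) * (star x * x)) := by
      intro x
      rw [i2, smul_mul_assoc, map_smul, smul_eq_mul]
      exact mul_nonneg h2innn (hcentral (1 - (U:A)) hv₂ x)
    have killb := pure_centralizer_kill φ hpos hφ1 hpure b hb0 hp1 hp2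
    have hsum : ∀ x : A, φ ((U:A) * x) + φ (star (U:A) * x) = 0 := by
      intro x
      have h := killb x
      rw [hbdef, smul_mul_assoc, add_mul, map_smul, map_add, smul_eq_mul] at h
      rcases mul_eq_zero.mp h with h2 | h2
      · exact absurd h2 (inv_ne_zero two_ne_zero)
      · exact h2
    -- second decomposition : imaginary part of U
    set d : A := (2:ℂ)⁻¹ • (Complex.I • (star (U:A) - (U:A))) with hddef
    have hd0 : φ d = 0 := by
      rw [hddef, map_smul, map_smul, map_sub, hU0, hUs0, sub_zero, smul_zero, smul_zero]
    have hw₁ : ∀ y, φ ((1 - Complex.I • (U:A)) * y) = φ (y * (1 - Complex.I • (U:A))) := by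
      intro y
      simp only [sub_mul, mul_sub, one_mul, mul_one, map_sub, smul_mul_assoc,
        mul_smul_comm, map_smul]
      rw [hcen y]
    have hw₂ : ∀ y, φ ((1 + Complex.I • (U:A)) * y) = φ (y * (1 + Complex.I • (U:A))) := by
      intro y
      simp only [add_mul, mul_add, one_mul, mul_one, map_add, smul_mul_assoc,
        mul_smul_comm, map_smul]
      rw [hcen y]
    have i3 : (1:A) + d
        = (2:ℂ)⁻¹ • ((1 - Complex.I • (U:A)) * star (1 - Complex.I • (U:A))) := by
      have hstar : star ((1:A) - Complex.I • (U:A)) = 1 + Complex.I • star (U:A) := by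
        rw [star_sub, star_one, star_smul, Complex.star_def, Complex.conj_I, neg_smul,
          sub_neg_eq_add]
      have hprod : (1 - Complex.I • (U:A)) * (1 + Complex.I • star (U:A))
          = ((1:A) + 1) + Complex.I • (star (U:A) - (U:A)) := by
        simp only [mul_add, sub_mul, one_mul, mul_one, smul_mul_smul,
          Complex.I_mul_I, Unitary.mul_star_self_of_mem U.prop, neg_one_smul, smul_sub]
        abel
      rw [hstar, hprod, smul_add, htwoinv, hddef]
    have i4 : (1:A) - d
        = (2:ℂ)⁻¹ • ((1 + Complex.I • (U:A)) * star (1 + Complex.I • (U:A))) := by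
      have hstar : star ((1:A) + Complex.I • (U:A)) = 1 - Complex.I • star (U:A) := by
        rw [star_add, star_one, star_smul, Complex.star_def, Complex.conj_I, neg_smul,
          ← sub_eq_add_neg]
      have hprod : (1 + Complex.I • (U:A)) * (1 - Complex.I • star (U:A))
          = ((1:A) + 1) - Complex.I • (star (U:A) - (U:A)) := by
        simp only [mul_sub, add_mul, one_mul, mul_one, smul_mul_smul,
          Complex.I_mul_I, Unitary.mul_star_self_of_mem U.prop, neg_one_smul, smul_sub]
        abel
      rw [hstar, hprod, smul_sub, htwoinv, hddef]
    have hp3 : ∀ x : A, 0 ≤ φ ((1 + d) * (star x * x)) := by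
      intro x
      rw [i3, smul_mul_assoc, map_smul, smul_eq_mul]
      exact mul_nonneg h2innn (hcentral _ hw₁ x)
    have hp4 : ∀ x : A, 0 ≤ φ ((1 - d) * (star x * x)) := by
      intro x
      rw [i4, smul_mul_assoc, map_smul, smul_eq_mul]
      exact mul_nonneg h2innn (hcentral _ hw₂ x)
    have killd := pure_centralizer_kill φ hpos hφ1 hpure d hd0 hp3 hp4
    have hdiff : ∀ x : A, φ (star (U:A) * x) - φ ((U:A) * x) = 0 := by
      intro x
      have h := killd x
      rw [hddef, smul_mul_assoc, smul_mul_assoc, sub_mul, map_smul, map_smul, map_sub,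
        smul_eq_mul, smul_eq_mul] at h
      rcases mul_eq_zero.mp h with h2 | h2
      · exact absurd h2 (inv_ne_zero two_ne_zero)
      · rcases mul_eq_zero.mp h2 with h3 | h3
        · exact absurd h3 Complex.I_ne_zero
        · exact h3
    have h1 := hsum (star (U:A))
    have h2 := hdiff (star (U:A))
    have h3 : φ ((U:A) * star (U:A)) = 0 := by linear_combination (h1 - h2) / 2
    rw [Unitary.mul_star_self_of_mem U.prop, hφ1] at h3
    exact one_ne_zero h3
end

section
/- Let α be an action of a compact group G on a unital C*-algebra 𝔄 and let E : 𝔄 → 𝔄^α, E(x) = ∫_G α_g(x) dg, be the canonical projection onto the fixed point algebra. Then the map ω ↦ ω∘E is an affine homeomorphism from the state space of 𝔄^α (with the weak*-topology) onto the set of α-invariant states of 𝔄 (with the weak*-topology), and under this map the pure states of 𝔄^α correspond exactly to the extremal α-invariant states of 𝔄. -/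
open scoped ComplexOrder
open MeasureTheory
open Complex

private lemma aux_star_sqrt {B : Type*} [CStarAlgebra B] (z : B)
    (hz : @LE.le B (CStarAlgebra.spectralOrder B).toLE 0 z) :
    z = star (cfc Real.sqrt z) * cfc Real.sqrt z := by
  letI := CStarAlgebra.spectralOrder B
  haveI := CStarAlgebra.spectralOrderedRing B
  have h1' : cfc (fun x : ℝ => Real.sqrt x * Real.sqrt x) z = cfc (id : ℝ → ℝ) z :=
    cfc_congr (fun x hx => Real.mul_self_sqrt (spectrum_nonneg_of_nonneg hz hx))
  have hsq : cfc Real.sqrt z * cfc Real.sqrt z = z := by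
    rw [← cfc_mul Real.sqrt Real.sqrt z, h1', cfc_id ℝ z]
  rw [(cfc_predicate Real.sqrt z : IsSelfAdjoint _).star_eq, hsq]

private lemma aux_nonneg_exists_star_mul_self {B : Type*} [CStarAlgebra B] (z : B)
    (hz : @LE.le B (CStarAlgebra.spectralOrder B).toLE 0 z) : ∃ c : B, z = star c * c :=
  ⟨cfc Real.sqrt z, aux_star_sqrt z hz⟩

/-- A star algebra equivalence of a C*-algebra, as a star algebra homomorphism. -/
private noncomputable def auxHom {A : Type*} [CStarAlgebra A] (e : A ≃⋆ₐ[ℂ] A) : A →⋆ₐ[ℂ] A :=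
  { toFun := e, map_one' := map_one e, map_mul' := map_mul e,
    map_zero' := map_zero e, map_add' := map_add e,
    commutes' := fun c => by
      show e (algebraMap ℂ A c) = algebraMap ℂ A c
      rw [Algebra.algebraMap_eq_smul_one, _root_.map_smul, map_one]
    map_star' := map_star e }

private lemma aux_equiv_sqrt {A : Type*} [CStarAlgebra A] (e : A ≃⋆ₐ[ℂ] A) (a : A)
    (ha : IsSelfAdjoint a) : e (cfc Real.sqrt a) = cfc Real.sqrt (e a) := by
  have hcont : Continuous (auxHom e) := (StarAlgEquiv.isometry e).continuous
  have hsa : IsSelfAdjoint (auxHom e a) := by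
    rw [IsSelfAdjoint, ← map_star, ha.star_eq]
  exact StarAlgHomClass.map_cfc (auxHom e) Real.sqrt a (hφ := hcont) (ha := ha) (hφa := hsa)
private lemma posFun_basic {B : Type*} [CStarAlgebra B] (u : B → ℂ)
    (hadd : ∀ x y, u (x + y) = u x + u y)
    (hsmul : ∀ (c : ℂ) x, u (c • x) = c * u x)
    (hpos : ∀ x, 0 ≤ u (star x * x)) :
    (∀ y, u (star y) = starRingEnd ℂ (u y)) ∧ (∀ y : B, ‖u y‖ ≤ (u 1).re * ‖y‖) := by
  letI := CStarAlgebra.spectralOrder B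
  haveI := CStarAlgebra.spectralOrderedRing B
  have hneg : ∀ x, u (-x) = - u x := by
    intro x
    have := hsmul (-1) x; simpa using this
  have hsub : ∀ x y, u (x - y) = u x - u y := by
    intro x y
    rw [sub_eq_add_neg, hadd, hneg, sub_eq_add_neg]
  have h1 : (0:ℂ) ≤ u 1 := by simpa using hpos 1
  have him : ∀ x : B, (u (star x * x)).im = 0 := fun x =>
    ((Complex.nonneg_iff.mp (hpos x)).2).symm
  have hre : ∀ x : B, 0 ≤ (u (star x * x)).re := fun x =>
    (Complex.nonneg_iff.mp (hpos x)).1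
  have hu1im : (u 1).im = 0 := (Complex.nonneg_iff.mp h1).2.symm
  -- star symmetry
  have hstar : ∀ y, u (star y) = starRingEnd ℂ (u y) := by
    intro y
    have e1 : star (1 + y) * (1 + y) = 1 + y + star y + star y * y := by
      rw [star_add, star_one]
      simp only [add_mul, mul_add, one_mul, mul_one]
      abel
    have e2 : star (1 + I • y) * (1 + I • y) = 1 + I • y - I • star y + star y * y := by
      rw [star_add, star_one, star_smul]
      simp only [star_def, conj_I]
      simp only [add_mul, mul_add, one_mul, mul_one, smul_mul_smul_comm, neg_smul, neg_mul,
        I_mul_I, neg_neg, one_smul, sub_eq_add_neg]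
      abel
    have i1 := him (1 + y)
    have i2 := him (1 + I • y)
    rw [e1, hadd, hadd, hadd] at i1
    rw [e2, hadd, hsub, hadd] at i2
    have hyy := him y
    rw [hsmul, hsmul] at i2
    simp only [Complex.add_im, Complex.sub_im, Complex.mul_im, Complex.I_re, Complex.I_im,
      zero_mul, one_mul, mul_zero, mul_one, zero_add, add_zero] at i1 i2
    apply Complex.ext
    · simp only [Complex.conj_re]
      linarith
    · simp only [Complex.conj_im]
      linarith
  refine ⟨hstar, ?_⟩
  -- monotone bound
  have hmono : ∀ y : B, (u (star y * y)).re ≤ ‖y‖^2 * (u 1).re := by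
    intro y
    set a := star y * y with ha
    have hsa : IsSelfAdjoint a := IsSelfAdjoint.star_mul_self y
    have hle : a ≤ algebraMap ℝ B ‖a‖ := hsa.le_algebraMap_norm_self
    have hz : 0 ≤ algebraMap ℝ B ‖a‖ - a := sub_nonneg.mpr hle
    obtain ⟨c, hc⟩ : ∃ c : B, algebraMap ℝ B ‖a‖ - a = star c * c :=
      aux_nonneg_exists_star_mul_self _ hz
    have hpz : (0:ℂ) ≤ u (algebraMap ℝ B ‖a‖ - a) := hc ▸ hpos c
    have halg : u (algebraMap ℝ B ‖a‖) = (‖a‖ : ℂ) * u 1 := by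
      rw [Algebra.algebraMap_eq_smul_one, ← algebraMap_smul ℂ (‖a‖ : ℝ) (1:B), hsmul]
      norm_num
    rw [hsub, halg] at hpz
    have hval := (Complex.nonneg_iff.mp hpz).1
    simp only [Complex.sub_re, Complex.mul_re, Complex.ofReal_re, Complex.ofReal_im,
      zero_mul, sub_zero] at hval
    have hnorm : ‖a‖ = ‖y‖^2 := by rw [ha, CStarRing.norm_star_mul_self]; ring
    rw [hnorm] at hval
    linarith
  -- Cauchy-Schwarz family
  have hfam : ∀ (y : B) (s : ℝ),
      0 ≤ (u (star y * y)).re - 2*s*‖u y‖^2 + s^2*‖u y‖^2*(u 1).re := by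
    intro y s
    set c : ℂ := (s : ℂ) * u y with hcdef
    have hexp : star (y - c • 1) * (y - c • 1)
        = star y * y - c • star y - (starRingEnd ℂ c) • y + (c * starRingEnd ℂ c) • 1 := by
      rw [star_sub, star_smul, star_one]
      simp only [star_def]
      simp only [sub_mul, mul_sub, smul_mul_assoc, mul_smul_comm, smul_sub, smul_smul,
        one_mul, mul_one]
      abel
    have hkey := hpos (y - c • 1)
    rw [hexp, hadd, hsub, hsub, hsmul, hsmul, hsmul, hstar] at hkey
    have hval := (Complex.nonneg_iff.mp hkey).1
    have e1 : c * starRingEnd ℂ (u y) = ((s * ‖u y‖^2 : ℝ) : ℂ) := by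
      rw [hcdef, mul_assoc, Complex.mul_conj, Complex.normSq_eq_norm_sq]
      push_cast
      ring
    have e2 : starRingEnd ℂ c * u y = ((s * ‖u y‖^2 : ℝ) : ℂ) := by
      rw [hcdef, map_mul, Complex.conj_ofReal, mul_assoc, mul_comm (starRingEnd ℂ (u y)),
        Complex.mul_conj, Complex.normSq_eq_norm_sq]
      push_cast
      ring
    have e3 : c * starRingEnd ℂ c = ((s^2 * ‖u y‖^2 : ℝ) : ℂ) := by
      rw [hcdef, map_mul, Complex.conj_ofReal,
        show ((s:ℂ) * u y * ((s:ℂ) * starRingEnd ℂ (u y)))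
          = (s:ℂ)*(s:ℂ)*(u y * starRingEnd ℂ (u y)) by ring,
        Complex.mul_conj, Complex.normSq_eq_norm_sq]
      push_cast
      ring
    rw [e1, e2, e3] at hval
    simp only [Complex.add_re, Complex.sub_re, Complex.ofReal_re, Complex.mul_re,
      Complex.ofReal_im, zero_mul, sub_zero] at hval
    linarith
  -- conclude
  intro y
  rcases eq_or_lt_of_le (norm_nonneg (u y)) with hN | hN
  · rw [← hN]
    have hO : 0 ≤ (u 1).re := (Complex.nonneg_iff.mp h1).1
    positivity
  · set N := ‖u y‖^2 with hNdef
    have hNpos : 0 < N := by positivity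
    set O := (u 1).re with hOdef
    have hO : 0 ≤ O := (Complex.nonneg_iff.mp h1).1
    set P := (u (star y * y)).re with hPdef
    have hP : 0 ≤ P := hre y
    rcases eq_or_lt_of_le hO with hO0 | hOpos
    · exfalso
      have hf := hfam y ((P+1)/(2*N))
      have h3 : ((P+1)/(2*N))^2*N*O = 0 := by rw [← hO0]; ring
      have h4 : 2*((P+1)/(2*N))*N = P+1 := by field_simp
      simp only [← hNdef, ← hPdef] at hf
      rw [h4, h3] at hf
      linarith
    · have hf := hfam y (1/O)
      simp only [← hNdef, ← hPdef] at hf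
      have hO' : O ≠ 0 := ne_of_gt hOpos
      have e1 : (1/O)^2*N*O = N/O := by field_simp
      have e2 : 2*(1/O)*N = 2*(N/O) := by ring
      rw [e1, e2] at hf
      have hkey : N ≤ P * O := by
        have : N/O ≤ P := by linarith
        calc N = (N/O)*O := by field_simp
          _ ≤ P * O := by nlinarith
      have hPb := hmono y
      simp only [← hPdef] at hPb
      have hsq2 : ‖u y‖^2 ≤ (O * ‖y‖)^2 := by
        calc ‖u y‖^2 = N := by rw [hNdef]
          _ ≤ P * O := hkey
          _ ≤ (‖y‖^2 * O) * O := by nlinarith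
          _ = (O * ‖y‖)^2 := by ring
      exact le_of_pow_le_pow_left₀ two_ne_zero (by positivity) hsq2


/-- `u` is an extreme point of the convex set `S`. -/
def ExtremeIn {F : Type*} [AddCommGroup F] [Module ℝ F] (S : Set F) (u : F) : Prop :=
  u ∈ S ∧ ∀ v ∈ S, ∀ w ∈ S, ∀ t : ℝ, 0 < t → t < 1 → u = t • v + (1 - t) • w → v = u ∧ w = u

/-- The fixed point algebra `𝔄^α` of an action, as a star subalgebra. -/
def fixedAlg {G : Type*} [Group G] {A : Type*} [CStarAlgebra A]
    (α : G → A ≃⋆ₐ[ℂ] A) : StarSubalgebra ℂ A where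
  carrier := {x | ∀ g, α g x = x}
  mul_mem' {x y} hx hy := fun g => by rw [map_mul, hx g, hy g]
  add_mem' {x y} hx hy := fun g => by rw [map_add, hx g, hy g]
  algebraMap_mem' c := fun g => by
    rw [Algebra.algebraMap_eq_smul_one, _root_.map_smul, map_one]
  star_mem' {x} hx := fun g => by rw [map_star, hx g]

/-- **Section 3, introductory remarks**: for an action `α` of a compact group `G` on a unital
C*-algebra `A`, with `E(x) = ∫_G α_g(x) dg` the canonical projection onto the fixed point
algebra, the map `ω ↦ ω ∘ E` is an affine homeomorphism (for the weak*-topologies, i.e. the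
topologies of pointwise convergence) from the state space of `𝔄^α` onto the `α`-invariant
states of `A`, under which pure states correspond exactly to extremal invariant states. -/
theorem state_space_of_fixed_point_algebra_homeomorphic_invariant_states
    {G : Type*} [Group G] [TopologicalSpace G] [IsTopologicalGroup G] [CompactSpace G]
    [T2Space G] [MeasurableSpace G] [BorelSpace G]
    (μ : Measure G) [μ.IsHaarMeasure] [IsProbabilityMeasure μ]
    {A : Type*} [CStarAlgebra A]
    (α : G → A ≃⋆ₐ[ℂ] A)
    (hα1 : α 1 = StarAlgEquiv.refl ℂ A)
    (hαmul : ∀ g h, α (g * h) = (α h).trans (α g))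
    (hcont : ∀ x : A, Continuous fun g => α g x)
    (E : A → A) (hEdef : ∀ x, E x = ∫ g, α g x ∂μ)
    (hE : ∀ x, E x ∈ fixedAlg α) :
    -- states on the fixed point algebra (positivity plus normalization; such functionals are
    -- automatically bounded, with norm one)
    let SF : Set (↥(fixedAlg α) → ℂ) :=
      {u | (∀ x y, u (x + y) = u x + u y) ∧ (∀ (c : ℂ) x, u (c • x) = c * u x) ∧
        (∀ x, 0 ≤ u (star x * x)) ∧ u 1 = 1}
    -- the `α`-invariant states of `A`
    let IS : Set (A → ℂ) :=
      {f | ∃ φ : A →L[ℂ] ℂ, IsState φ ∧ (∀ g x, φ (α g x) = φ x) ∧ f = ⇑φ}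
    -- the map `ω ↦ ω ∘ E`
    let T : (↥(fixedAlg α) → ℂ) → (A → ℂ) :=
      fun u x => u ⟨E x, hE x⟩
    -- the restriction map, inverse to `T`
    let r : (A → ℂ) → (↥(fixedAlg α) → ℂ) :=
      fun f x => f ↑x
    -- `T` is a bijection from the state space of `𝔄^α` onto the invariant states,
    Set.BijOn T SF IS ∧
    -- with inverse the restriction map,
    Set.InvOn r T SF IS ∧
    -- both continuous for the (weak*, i.e. pointwise) topologies, so `T` is a homeomorphism,
    Continuous T ∧ Continuous r ∧
    -- `T` is affine,
    (∀ u ∈ SF, ∀ v ∈ SF, ∀ t : ℝ, 0 ≤ t → t ≤ 1 →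
      T (t • u + (1 - t) • v) = t • T u + (1 - t) • T v) ∧
    -- and pure states of `𝔄^α` correspond exactly to extremal invariant states of `A`.
    (∀ u ∈ SF, ExtremeIn SF u ↔ ExtremeIn IS (T u)) := by
  intro SF IS T r
  letI := CStarAlgebra.spectralOrder A
  haveI := CStarAlgebra.spectralOrderedRing A
  -- the fixed point algebra is closed
  have hSclosed : IsClosed ((fixedAlg α : Set A)) := by
    have hset : (fixedAlg α : Set A) = ⋂ g, {x : A | α g x = x} := by
      ext x
      simp only [Set.mem_iInter, SetLike.mem_coe, Set.mem_setOf_eq]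
      exact Iff.rfl
    rw [hset]
    exact isClosed_iInter fun g =>
      isClosed_eq (StarAlgEquiv.isometry (α g)).continuous continuous_id
  haveI : CompleteSpace ↥(fixedAlg α) := hSclosed.completeSpace_coe
  letI : CStarAlgebra ↥(fixedAlg α) := {}
  -- integrability
  have hint : ∀ x : A, Integrable (fun g => α g x) μ := fun x =>
    (hcont x).integrable_of_hasCompactSupport (HasCompactSupport.of_compactSpace _)
  -- basic properties of E
  have hEadd : ∀ x y, E (x + y) = E x + E y := by
    intro x y
    rw [hEdef, hEdef, hEdef, ← integral_add (hint x) (hint y)]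
    simp only [map_add]
  have hEsmul : ∀ (c : ℂ) (x : A), E (c • x) = c • E x := by
    intro c x
    rw [hEdef, hEdef, ← integral_smul]
    simp only [_root_.map_smul]
  have hEnorm : ∀ x, ‖E x‖ ≤ ‖x‖ := by
    intro x
    rw [hEdef]
    calc ‖∫ g, α g x ∂μ‖ ≤ ∫ g, ‖α g x‖ ∂μ := norm_integral_le_integral_norm _
      _ = ∫ (_ : G), ‖x‖ ∂μ := by simp only [StarAlgEquiv.norm_map]
      _ = ‖x‖ := by simp [measure_univ]
  have hE1 : E 1 = 1 := by
    rw [hEdef]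
    simp only [map_one]
    simp [measure_univ]
  have hEfix : ∀ x, x ∈ fixedAlg α → E x = x := by
    intro x hx
    rw [hEdef]
    have hconst : (fun g => α g x) = fun _ => x := funext fun g => hx g
    rw [hconst]
    simp [measure_univ]
  have hEproj : ∀ y : ↥(fixedAlg α), (⟨E ↑y, hE ↑y⟩ : ↥(fixedAlg α)) = y :=
    fun y => Subtype.ext (hEfix _ y.2)
  -- right invariance of Haar measure on a compact group
  have hmp : ∀ h : G, MeasurePreserving (fun g => g * h) μ μ := by
    intro h
    have hm : Measurable (fun g : G => g * h) := measurable_mul_const h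
    have hmap : μ.map (· * h) = μ := by
      haveI h2 : IsProbabilityMeasure (μ.map (· * h)) :=
        Measure.isProbabilityMeasure_map hm.aemeasurable
      have heq := Measure.isMulInvariant_eq_smul_of_compactSpace (μ.map (· * h)) μ
      have huniv := congrArg (fun m : Measure G => m Set.univ) heq
      simp only [Measure.smul_apply, measure_univ] at huniv
      rw [ENNReal.smul_def, smul_eq_mul, mul_one] at huniv
      have hone : (μ.map (· * h)).haarScalarFactor μ = 1 := by exact_mod_cast huniv.symm
      rw [heq, hone, one_smul]
    exact ⟨hm, hmap⟩
  have hEinv : ∀ (h : G) (x : A), E (α h x) = E x := by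
    intro h x
    rw [hEdef, hEdef]
    have hcongr : (fun g => α g (α h x)) = fun g => α (g * h) x :=
      funext fun g => by rw [hαmul g h]; rfl
    rw [hcongr]
    exact (hmp h).integral_comp (MeasurableEquiv.mulRight h).measurableEmbedding (fun k => α k x)
  -- positivity of E
  have hsmulnn : ∀ s : ℝ, 0 ≤ s → ∀ a : A, 0 ≤ a → 0 ≤ s • a := by
    intro s hs a ha
    obtain ⟨c, hc⟩ := aux_nonneg_exists_star_mul_self a ha
    have : s • a = star (Real.sqrt s • c) * (Real.sqrt s • c) := by
      rw [star_smul, star_trivial, smul_mul_smul_comm, Real.mul_self_sqrt hs, hc]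
    rw [this]
    exact star_mul_self_nonneg _
  have hEpos : ∀ x : A, 0 ≤ E (star x * x) := by
    intro x
    rw [hEdef]
    have hconv : Convex ℝ {a : A | 0 ≤ a} := by
      intro a ha b hb s t hs ht _
      exact add_nonneg (hsmulnn s hs a ha) (hsmulnn t ht b hb)
    have hmem : ∀ᵐ g ∂μ, α g (star x * x) ∈ {a : A | 0 ≤ a} := by
      refine Filter.Eventually.of_forall fun g => ?_
      show (0:A) ≤ α g (star x * x)
      rw [map_mul, map_star]
      exact star_mul_self_nonneg _
    exact hconv.integral_mem CStarAlgebra.isClosed_nonneg hmem (hint _)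
  -- nonnegative fixed elements are squares of fixed elements
  have hfixc : ∀ p : A, p ∈ fixedAlg α → 0 ≤ p → ∃ c, c ∈ fixedAlg α ∧ p = star c * c := by
    intro p hp hppos
    refine ⟨cfc Real.sqrt p, fun g => ?_, aux_star_sqrt p hppos⟩
    have hsa : IsSelfAdjoint p := IsSelfAdjoint.of_nonneg hppos
    rw [aux_equiv_sqrt (α g) p hsa]
    show cfc Real.sqrt ((α g) p) = cfc Real.sqrt p
    rw [hp g]
  -- states are nonnegative on nonnegative fixed elements
  have hSFpos : ∀ u ∈ SF, ∀ (p : A) (hp : p ∈ fixedAlg α), 0 ≤ p → 0 ≤ u ⟨p, hp⟩ := by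
    intro u hu p hp hppos
    obtain ⟨-, -, hupos, -⟩ := id hu
    obtain ⟨c, hcmem, hceq⟩ := hfixc p hp hppos
    have heq : (⟨p, hp⟩ : ↥(fixedAlg α))
        = star (⟨c, hcmem⟩ : ↥(fixedAlg α)) * ⟨c, hcmem⟩ := Subtype.ext hceq
    rw [heq]
    exact hupos _
  have hnontriv : ∀ u ∈ SF, Nontrivial A := by
    intro u hu
    obtain ⟨-, husmul, -, huone⟩ := id hu
    by_contra hcon
    rw [not_nontrivial_iff_subsingleton] at hcon
    have h10 : (1 : ↥(fixedAlg α)) = 0 := Subtype.ext (Subsingleton.elim _ _)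
    have hu0 : u 0 = 0 := by simpa using husmul 0 0
    rw [h10, hu0] at huone
    exact one_ne_zero huone.symm
  -- the forward map lands in the invariant states
  have hTmem : ∀ u ∈ SF, T u ∈ IS := by
    intro u hu
    obtain ⟨huadd, husmul, hupos, huone⟩ := id hu
    haveI := hnontriv u hu
    have hbase := posFun_basic (B := ↥(fixedAlg α)) u huadd husmul hupos
    have hbound : ∀ y : ↥(fixedAlg α), ‖u y‖ ≤ ‖y‖ := by
      intro y
      have h := hbase.2 y
      rw [huone] at h
      simpa using h
    let L : A →ₗ[ℂ] ℂ :=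
      { toFun := fun x => u ⟨E x, hE x⟩
        map_add' := fun x y => by
          show u ⟨E (x + y), hE _⟩ = u ⟨E x, hE x⟩ + u ⟨E y, hE y⟩
          have hx : (⟨E (x + y), hE _⟩ : ↥(fixedAlg α)) = ⟨E x, hE x⟩ + ⟨E y, hE y⟩ :=
            Subtype.ext (hEadd x y)
          rw [hx, huadd]
        map_smul' := fun c x => by
          show u ⟨E (c • x), hE _⟩ = (RingHom.id ℂ) c • u ⟨E x, hE x⟩
          have hx : (⟨E (c • x), hE _⟩ : ↥(fixedAlg α)) = c • ⟨E x, hE x⟩ :=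
            Subtype.ext (hEsmul c x)
          rw [hx, husmul]
          rfl }
    have hLbound : ∀ x : A, ‖L x‖ ≤ 1 * ‖x‖ := by
      intro x
      rw [one_mul]
      calc ‖u ⟨E x, hE x⟩‖ ≤ ‖(⟨E x, hE x⟩ : ↥(fixedAlg α))‖ := hbound _
        _ = ‖E x‖ := rfl
        _ ≤ ‖x‖ := hEnorm x
    let φ : A →L[ℂ] ℂ := L.mkContinuous 1 hLbound
    have hφ1 : φ 1 = 1 := by
      show u ⟨E 1, hE 1⟩ = 1
      have h1 : (⟨E 1, hE 1⟩ : ↥(fixedAlg α)) = 1 := Subtype.ext hE1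
      rw [h1, huone]
    refine ⟨φ, ⟨?_, ?_⟩, ?_, ?_⟩
    · intro x
      show 0 ≤ u ⟨E (star x * x), hE _⟩
      exact hSFpos u hu _ _ (hEpos x)
    · refine le_antisymm (LinearMap.mkContinuous_norm_le L zero_le_one _) ?_
      have hle := φ.le_opNorm 1
      rw [hφ1] at hle
      simpa [CStarRing.norm_one] using hle
    · intro g x
      show u ⟨E (α g x), hE _⟩ = u ⟨E x, hE x⟩
      congr 1
      exact Subtype.ext (hEinv g x)
    · rfl
  -- restriction maps invariant states into states of the fixed point algebra
  have hrmem : ∀ f ∈ IS, r f ∈ SF := by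
    rintro f ⟨φ, ⟨hφpos, hφnorm⟩, hφinv, rfl⟩
    haveI : Nontrivial A := by
      by_contra hcon
      rw [not_nontrivial_iff_subsingleton] at hcon
      have hz : (φ : A →L[ℂ] ℂ) = 0 := by
        ext x
        rw [Subsingleton.elim x (0 : A), map_zero]
        rfl
      rw [hz] at hφnorm
      simp at hφnorm
    have hφ1 : φ 1 = 1 := by
      have hbase := posFun_basic (B := A) ⇑φ (map_add φ)
        (fun c x => by rw [_root_.map_smul]; rfl) hφpos
      have hre1 : 0 ≤ (φ 1).re ∧ (φ 1).im = 0 := by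
        have := hφpos 1
        rw [star_one, one_mul] at this
        exact ⟨(Complex.nonneg_iff.mp this).1, ((Complex.nonneg_iff.mp this).2).symm⟩
      have h1 : ‖φ‖ ≤ (φ 1).re := φ.opNorm_le_bound hre1.1 fun x => hbase.2 x
      have h2 : (φ 1).re ≤ 1 := by
        have hle := φ.le_opNorm 1
        rw [hφnorm, CStarRing.norm_one, mul_one] at hle
        calc (φ 1).re ≤ ‖φ 1‖ := Complex.re_le_norm _
          _ ≤ 1 := hle
      rw [hφnorm] at h1
      exact Complex.ext (le_antisymm h2 h1) (by simpa using hre1.2)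
    refine ⟨fun x y => ?_, fun c x => ?_, fun x => ?_, ?_⟩
    · show φ ((x + y : ↥(fixedAlg α)) : A) = φ ↑x + φ ↑y
      rw [show ((x + y : ↥(fixedAlg α)) : A) = ↑x + ↑y from rfl, map_add]
    · show φ ((c • x : ↥(fixedAlg α)) : A) = c * φ ↑x
      rw [show ((c • x : ↥(fixedAlg α)) : A) = c • ↑x from rfl, _root_.map_smul]
      rfl
    · show (0:ℂ) ≤ φ ((star x * x : ↥(fixedAlg α)) : A)
      rw [show ((star x * x : ↥(fixedAlg α)) : A) = star (x : A) * x from rfl]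
      exact hφpos _
    · show φ ((1 : ↥(fixedAlg α)) : A) = 1
      rw [show ((1 : ↥(fixedAlg α)) : A) = (1:A) from rfl, hφ1]
  -- inverse properties
  have hleft : Set.LeftInvOn r T SF := by
    intro u _
    funext y
    show u ⟨E ↑y, hE ↑y⟩ = u y
    rw [hEproj y]
  have hright : Set.RightInvOn r T IS := by
    rintro f ⟨φ, _, hφinv, rfl⟩
    funext x
    show φ (E x) = φ x
    rw [hEdef, ← ContinuousLinearMap.integral_comp_comm φ (hint x)]
    simp only [hφinv]
    simp [measure_univ]
  -- T is affine (pointwise)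
  have hTaff : ∀ (u v : ↥(fixedAlg α) → ℂ) (t : ℝ),
      T (t • u + (1 - t) • v) = t • T u + (1 - t) • T v := fun u v t => rfl
  have hraff : ∀ (f g : A → ℂ) (t : ℝ),
      r (t • f + (1 - t) • g) = t • r f + (1 - t) • r g := fun f g t => rfl
  refine ⟨⟨fun u hu => hTmem u hu, hleft.injOn, fun f hf => ⟨r f, hrmem f hf, hright hf⟩⟩,
    ⟨hleft, hright⟩, continuous_pi fun x => continuous_apply _,
    continuous_pi fun y => continuous_apply _,
    fun u _ v _ t _ _ => hTaff u v t, fun u hu => ?_⟩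
  constructor
  · intro he
    refine ⟨hTmem u hu, fun v hv w hw t ht0 ht1 heq => ?_⟩
    have hu' : u = t • r v + (1 - t) • r w := by
      calc u = r (T u) := (hleft hu).symm
        _ = t • r v + (1 - t) • r w := by rw [heq]; exact hraff v w t
    obtain ⟨hv', hw'⟩ := he.2 (r v) (hrmem v hv) (r w) (hrmem w hw) t ht0 ht1 hu'
    constructor
    · calc v = T (r v) := (hright hv).symm
        _ = T u := by rw [hv']
    · calc w = T (r w) := (hright hw).symm
        _ = T u := by rw [hw']
  · intro he
    refine ⟨hu, fun v hv w hw t ht0 ht1 heq => ?_⟩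
    have hT' : T u = t • T v + (1 - t) • T w := by
      rw [heq]; exact hTaff v w t
    obtain ⟨hv', hw'⟩ := he.2 (T v) (hTmem v hv) (T w) (hTmem w hw) t ht0 ht1 hT'
    constructor
    · calc v = r (T v) := (hleft hv).symm
        _ = r (T u) := by rw [hv']
        _ = u := hleft hu
    · calc w = r (T w) := (hleft hw).symm
        _ = r (T u) := by rw [hw']
        _ = u := hleft hu
end
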